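/- arXiv:1510.09073 — 12 statements merged into one kernel-verified Lean document; each statement's English description precedes it below -/
import Mathlib

section
/- Generalized Akin's Lemma: Let S_X and S_Y be measurable spaces, let σ_X be a memory-one strategy for player X (a Markov kernel from S_X × S_Y to S_X) with initial action σ_X^0 (a probability measure on S_X), let λ ∈ (0,1), and let (ν_t)_{t≥0} be any play sequence compatible with (σ_X^0, σ_X). Then for every measurable set E ⊆ S_X, the series ∑_{t=0}^∞ λ^t ∫_{S_X×S_Y} [𝟙_E(x) − λ·σ_X[x,y](E)] dν_t(x,y) converges and equals σ_X^0(E). -/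
open MeasureTheory ProbabilityTheory

/-- **Generalized Akin's Lemma.** For any memory-one strategy `σX` (a Markov kernel)
with initial action `σ0`, discount factor `lam ∈ (0,1)`, and any play sequence `ν`
compatible with `(σ0, σX)`, for every measurable set `E ⊆ S_X` the series
`∑ₜ lamᵗ ∫ [𝟙_E(x) − lam·σX[x,y](E)] dνₜ(x,y)` converges and equals `σ0 E`. -/
theorem generalized_akin_lemma
    {SX SY : Type*} [MeasurableSpace SX] [MeasurableSpace SY]
    (σX : Kernel (SX × SY) SX) [IsMarkovKernel σX]
    (σ0 : Measure SX) [IsProbabilityMeasure σ0]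
    (lam : ℝ) (hlam : lam ∈ Set.Ioo (0 : ℝ) 1)
    (ν : ℕ → Measure (SX × SY)) (hνp : ∀ t, IsProbabilityMeasure (ν t))
    (hν0 : ∀ E : Set SX, MeasurableSet E → ν 0 (E ×ˢ Set.univ) = σ0 E)
    (hνsucc : ∀ t : ℕ, ∀ E : Set SX, MeasurableSet E →
      ν (t + 1) (E ×ˢ Set.univ) = ∫⁻ q, σX q E ∂ ν t)
    (E : Set SX) (hE : MeasurableSet E) :
    HasSum
      (fun t : ℕ => lam ^ t *
        ∫ q, (E.indicator (fun _ => (1 : ℝ)) q.1 - lam * (σX q E).toReal) ∂ ν t)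
      (σ0 E).toReal := by
  obtain ⟨hl0, hl1⟩ := hlam
  set a : ℕ → ℝ := fun t => (ν t (E ×ˢ Set.univ)).toReal with ha
  set g : ℕ → ℝ := fun t => lam ^ t * a t with hg
  have ha_bd : ∀ t, a t ≤ 1 := by
    intro t
    have := hνp t
    have h := prob_le_one (μ := ν t) (s := E ×ˢ Set.univ)
    simpa [a] using ENNReal.toReal_le_of_le_ofReal zero_le_one (by simpa using h)
  have ha_nn : ∀ t, 0 ≤ a t := fun t => ENNReal.toReal_nonneg
  have hmeas : Measurable (fun q : SX × SY => (σX q E).toReal) :=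
    (σX.measurable_coe hE).ennreal_toReal
  -- integrability of the two pieces
  have hint1 : ∀ t, Integrable (fun q : SX × SY => E.indicator (fun _ => (1 : ℝ)) q.1) (ν t) := by
    intro t
    have := hνp t
    refine Integrable.mono' (integrable_const 1) ?_ ?_
    · exact ((measurable_const.indicator hE).comp measurable_fst).aestronglyMeasurable
    · refine Filter.Eventually.of_forall fun q => ?_
      rw [Real.norm_eq_abs]
      by_cases h : q.1 ∈ E <;> simp [Set.indicator_apply, h]
  have hint2 : ∀ t, Integrable (fun q : SX × SY => (σX q E).toReal) (ν t) := by
    intro t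
    have := hνp t
    refine Integrable.mono' (integrable_const 1) hmeas.aestronglyMeasurable ?_
    refine Filter.Eventually.of_forall fun q => ?_
    rw [Real.norm_eq_abs, abs_of_nonneg ENNReal.toReal_nonneg]
    exact ENNReal.toReal_le_of_le_ofReal zero_le_one (by simpa using prob_le_one)
  -- the integrals compute
  have hI1 : ∀ t, ∫ q, E.indicator (fun _ => (1 : ℝ)) q.1 ∂ ν t = a t := by
    intro t
    have heq : (fun q : SX × SY => E.indicator (fun _ => (1 : ℝ)) q.1)
        = (E ×ˢ (Set.univ : Set SY)).indicator (fun _ => (1 : ℝ)) := by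
      ext q
      by_cases h : q.1 ∈ E <;> simp [Set.indicator_apply, h, Set.mem_prod]
    rw [heq]
    have h := integral_indicator_const (1 : ℝ) (hE.prod MeasurableSet.univ) (μ := ν t)
    simp only [smul_eq_mul, mul_one] at h
    rw [h]
    rfl
  have hI2 : ∀ t, ∫ q, (σX q E).toReal ∂ ν t = a (t + 1) := by
    intro t
    rw [integral_toReal (σX.measurable_coe hE).aemeasurable
      (Filter.Eventually.of_forall fun q => measure_lt_top _ _)]
    rw [ha]
    simp only [hνsucc t E hE]
  -- the summand telescopes
  have hterm : ∀ t, lam ^ t *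
      ∫ q, (E.indicator (fun _ => (1 : ℝ)) q.1 - lam * (σX q E).toReal) ∂ ν t
      = g t - g (t + 1) := by
    intro t
    rw [integral_sub (hint1 t) ((hint2 t).const_mul lam), integral_const_mul, hI1, hI2]
    simp only [hg]
    ring
  have hF : (fun t : ℕ => lam ^ t *
      ∫ q, (E.indicator (fun _ => (1 : ℝ)) q.1 - lam * (σX q E).toReal) ∂ ν t)
      = fun t => g t - g (t + 1) := funext hterm
  rw [hF]
  have hsummable : Summable (fun t : ℕ => g t - g (t + 1)) := by
    apply Summable.of_abs
    refine Summable.of_nonneg_of_le (fun t => abs_nonneg _) (fun t => ?_)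
      ((summable_geometric_of_lt_one (le_of_lt hl0) hl1).mul_left 2)
    have h1 : |g t| ≤ lam ^ t := by
      rw [hg, abs_mul, abs_of_nonneg (le_of_lt (pow_pos hl0 t)),
        abs_of_nonneg (ha_nn t)]
      nlinarith [pow_pos hl0 t, ha_bd t, ha_nn t]
    have h2 : |g (t + 1)| ≤ lam ^ t := by
      rw [hg, abs_mul, abs_of_nonneg (le_of_lt (pow_pos hl0 (t + 1))),
        abs_of_nonneg (ha_nn (t + 1))]
      have : lam ^ (t + 1) ≤ lam ^ t :=
        pow_le_pow_of_le_one (le_of_lt hl0) (le_of_lt hl1) (Nat.le_succ t)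
      nlinarith [pow_pos hl0 (t + 1), ha_bd (t + 1), ha_nn (t + 1)]
    calc |g t - g (t + 1)| ≤ |g t| + |g (t + 1)| := abs_sub _ _
      _ ≤ 2 * lam ^ t := by linarith
  rw [hsummable.hasSum_iff_tendsto_nat]
  simp only [Finset.sum_range_sub' g]
  have hg0 : g 0 = (σ0 E).toReal := by
    simp [hg, ha, hν0 E hE]
  have hgn : Filter.Tendsto g Filter.atTop (nhds 0) := by
    have hpow : Filter.Tendsto (fun n : ℕ => lam ^ n) Filter.atTop (nhds 0) :=
      tendsto_pow_atTop_nhds_zero_of_lt_one (le_of_lt hl0) hl1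
    refine squeeze_zero_norm (fun n => ?_) hpow
    rw [hg, Real.norm_eq_abs, abs_mul, abs_of_nonneg (pow_pos hl0 n).le,
      abs_of_nonneg (ha_nn n)]
    nlinarith [pow_pos hl0 n, ha_bd n, ha_nn n]
  rw [← hg0]
  simpa using (tendsto_const_nhds.sub hgn)
end

section
/- Let S_X and S_Y be measurable spaces, let σ_X be a memory-one strategy for player X with initial action σ_X^0, let λ ∈ (0,1), let (ν_t)_{t≥0} be any play sequence compatible with (σ_X^0, σ_X), and let ψ : S_X → ℝ be a bounded measurable function. Then ∑_{t=0}^∞ λ^t ∫_{S_X×S_Y} [ψ(x) − λ·∫_{S_X} ψ(s) dσ_X[x,y](s)] dν_t(x,y) = ∫_{S_X} ψ(s) dσ_X^0(s). -/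
open MeasureTheory ProbabilityTheory

/-- For any memory-one strategy `σX` with initial action `σ0`, discount factor
`lam ∈ (0,1)`, play sequence `ν` compatible with `(σ0, σX)`, and bounded measurable
`ψ : S_X → ℝ`, the series
`∑ₜ lamᵗ ∫ [ψ(x) − lam·∫ ψ dσX[x,y]] dνₜ(x,y)` converges and equals `∫ ψ dσ0`. -/
theorem akin_lemma_bounded_function
    {SX SY : Type*} [MeasurableSpace SX] [MeasurableSpace SY]
    (σX : Kernel (SX × SY) SX) [IsMarkovKernel σX]
    (σ0 : Measure SX) [IsProbabilityMeasure σ0]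
    (lam : ℝ) (hlam : lam ∈ Set.Ioo (0 : ℝ) 1)
    (ν : ℕ → Measure (SX × SY)) (hνp : ∀ t, IsProbabilityMeasure (ν t))
    (hν0 : ∀ E : Set SX, MeasurableSet E → ν 0 (E ×ˢ Set.univ) = σ0 E)
    (hνsucc : ∀ t : ℕ, ∀ E : Set SX, MeasurableSet E →
      ν (t + 1) (E ×ˢ Set.univ) = ∫⁻ q, σX q E ∂ ν t)
    (ψ : SX → ℝ) (hψm : Measurable ψ) (Cψ : ℝ) (hψb : ∀ s, |ψ s| ≤ Cψ) :
    HasSum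
      (fun t : ℕ => lam ^ t *
        ∫ q, (ψ q.1 - lam * ∫ s, ψ s ∂ (σX q)) ∂ ν t)
      (∫ s, ψ s ∂ σ0) := by
  haveI := fun t => hνp t
  have hSX : Nonempty SX := Measure.nonempty_of_neZero σ0
  have hC : 0 ≤ Cψ := le_trans (abs_nonneg _) (hψb hSX.some)
  set a : ℕ → ℝ := fun t => ∫ p, ψ p.1 ∂ ν t with ha
  -- pushforward of ν t under fst
  have hmap : ∀ t, (ν t).map Prod.fst = ((ν t).map Prod.fst) := fun _ => rfl
  have hfst : ∀ t (E : Set SX), MeasurableSet E →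
      ((ν t).map Prod.fst) E = ν t (E ×ˢ Set.univ) := by
    intro t E hE
    rw [Measure.map_apply measurable_fst hE]
    congr 1
    ext p
    simp [Set.mem_prod]
  -- integrability of ψ ∘ fst
  have hint1 : ∀ t, Integrable (fun p : SX × SY => ψ p.1) (ν t) := by
    intro t
    refine ⟨(hψm.comp measurable_fst).aestronglyMeasurable, ?_⟩
    refine HasFiniteIntegral.of_bounded (C := Cψ) ?_
    filter_upwards with p using (by simpa using hψb p.1)
  -- measurability and boundedness of q ↦ ∫ ψ dσX q
  have hgm : StronglyMeasurable (fun q : SX × SY => ∫ s, ψ s ∂ σX q) := by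
    exact MeasureTheory.StronglyMeasurable.integral_kernel_prod_right'
      (f := fun p : (SX × SY) × SX => ψ p.2)
      ((hψm.comp measurable_snd).stronglyMeasurable)
  have hgb : ∀ q : SX × SY, |∫ s, ψ s ∂ σX q| ≤ Cψ := by
    intro q
    rw [← Real.norm_eq_abs]
    calc ‖∫ s, ψ s ∂ σX q‖ ≤ Cψ * ((σX q) Set.univ).toReal := by
          refine norm_integral_le_of_norm_le_const ?_
          filter_upwards with s using (by simpa using hψb s)
      _ = Cψ := by simp
  have hint2 : ∀ t, Integrable (fun q : SX × SY => ∫ s, ψ s ∂ σX q) (ν t) := by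
    intro t
    refine ⟨hgm.aestronglyMeasurable, ?_⟩
    refine HasFiniteIntegral.of_bounded (C := Cψ) ?_
    filter_upwards with q using (by simpa using hgb q)
  -- a 0 = ∫ ψ dσ0
  have hmap0 : (ν 0).map Prod.fst = σ0 := by
    ext E hE
    rw [hfst 0 E hE, hν0 E hE]
  have ha0 : a 0 = ∫ s, ψ s ∂ σ0 := by
    rw [← hmap0, integral_map measurable_fst.aemeasurable hψm.aestronglyMeasurable]
  -- key step : ∫ (∫ ψ dσX q) dν t = a (t+1)
  have hkey : ∀ t, ∫ q, (∫ s, ψ s ∂ σX q) ∂ ν t = a (t + 1) := by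
    intro t
    have hcp : ((ν t) ⊗ₘ σX).map Prod.snd = (ν (t + 1)).map Prod.fst := by
      ext E hE
      rw [Measure.map_apply measurable_snd hE, hfst (t + 1) E hE,
        Measure.compProd_apply (measurable_snd hE), hνsucc t E hE]
      rfl
    have hi : Integrable (fun p : (SX × SY) × SX => ψ p.2) ((ν t) ⊗ₘ σX) := by
      refine ⟨(hψm.comp measurable_snd).aestronglyMeasurable, ?_⟩
      refine HasFiniteIntegral.of_bounded (C := Cψ) ?_
      filter_upwards with p using (by simpa using hψb p.2)
    calc ∫ q, (∫ s, ψ s ∂ σX q) ∂ ν t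
        = ∫ p, ψ p.2 ∂ ((ν t) ⊗ₘ σX) := (Measure.integral_compProd hi).symm
      _ = ∫ s, ψ s ∂ (((ν t) ⊗ₘ σX).map Prod.snd) := by
          rw [integral_map measurable_snd.aemeasurable hψm.aestronglyMeasurable]
      _ = ∫ s, ψ s ∂ ((ν (t + 1)).map Prod.fst) := by rw [hcp]
      _ = a (t + 1) := integral_map measurable_fst.aemeasurable hψm.aestronglyMeasurable
  -- rewrite each term as a telescoping difference
  have hterm : ∀ t, lam ^ t * ∫ q, (ψ q.1 - lam * ∫ s, ψ s ∂ (σX q)) ∂ ν t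
      = lam ^ t * a t - lam ^ (t + 1) * a (t + 1) := by
    intro t
    rw [integral_sub (hint1 t) ((hint2 t).const_mul lam), integral_const_mul, hkey t]
    ring
  -- bound on a
  have hab : ∀ t, |a t| ≤ Cψ := by
    intro t
    rw [← Real.norm_eq_abs]
    calc ‖a t‖ ≤ Cψ * ((ν t) Set.univ).toReal := by
          refine norm_integral_le_of_norm_le_const ?_
          filter_upwards with p using (by simpa using hψb p.1)
      _ = Cψ := by simp
  -- summability
  have hsum : Summable (fun t : ℕ => lam ^ t *
      ∫ q, (ψ q.1 - lam * ∫ s, ψ s ∂ (σX q)) ∂ ν t) := by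
    refine Summable.of_norm_bounded (g := fun t => (2 * Cψ) * lam ^ t)
      ((summable_geometric_of_lt_one hlam.1.le hlam.2).mul_left _) ?_
    intro t
    rw [hterm t]
    have h1 : |lam ^ t * a t| ≤ lam ^ t * Cψ := by
      rw [abs_mul, abs_of_nonneg (pow_nonneg hlam.1.le t)]
      exact mul_le_mul_of_nonneg_left (hab t) (pow_nonneg hlam.1.le t)
    have h2 : |lam ^ (t + 1) * a (t + 1)| ≤ lam ^ t * Cψ := by
      rw [abs_mul, abs_of_nonneg (pow_nonneg hlam.1.le (t + 1))]
      calc lam ^ (t + 1) * |a (t + 1)| ≤ lam ^ (t + 1) * Cψ :=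
            mul_le_mul_of_nonneg_left (hab (t + 1)) (pow_nonneg hlam.1.le _)
        _ ≤ lam ^ t * Cψ := by
            refine mul_le_mul_of_nonneg_right ?_ hC
            exact pow_le_pow_of_le_one hlam.1.le hlam.2.le (Nat.le_succ t)
    calc ‖lam ^ t * a t - lam ^ (t + 1) * a (t + 1)‖
        ≤ |lam ^ t * a t| + |lam ^ (t + 1) * a (t + 1)| := abs_sub _ _
      _ ≤ lam ^ t * Cψ + lam ^ t * Cψ := add_le_add h1 h2
      _ = (2 * Cψ) * lam ^ t := by ring
  -- limit of λ^n * a n is 0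
  have hlim : Filter.Tendsto (fun n : ℕ => lam ^ n * a n) Filter.atTop (nhds 0) := by
    refine squeeze_zero_norm (a := fun n => Cψ * lam ^ n) (fun n => ?_) ?_
    · show ‖lam ^ n * a n‖ ≤ Cψ * lam ^ n
      rw [norm_mul, norm_pow, Real.norm_eq_abs, abs_of_nonneg hlam.1.le,
        mul_comm]
      exact mul_le_mul_of_nonneg_right (hab n) (pow_nonneg hlam.1.le n)
    · have := tendsto_pow_atTop_nhds_zero_of_lt_one hlam.1.le hlam.2
      simpa using this.const_mul Cψ
  -- conclude via telescoping partial sums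
  rw [hsum.hasSum_iff_tendsto_nat]
  have hps : ∀ n : ℕ, ∑ t ∈ Finset.range n,
      lam ^ t * ∫ q, (ψ q.1 - lam * ∫ s, ψ s ∂ (σX q)) ∂ ν t
      = lam ^ 0 * a 0 - lam ^ n * a n := by
    intro n
    calc ∑ t ∈ Finset.range n, lam ^ t * ∫ q, (ψ q.1 - lam * ∫ s, ψ s ∂ (σX q)) ∂ ν t
        = ∑ t ∈ Finset.range n, (lam ^ t * a t - lam ^ (t + 1) * a (t + 1)) := by
          exact Finset.sum_congr rfl (fun t _ => hterm t)
      _ = lam ^ 0 * a 0 - lam ^ n * a n := by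
          rw [← Finset.sum_range_sub' (fun t => lam ^ t * a t) n]
  simp only [hps, pow_zero, one_mul, ha0]
  have := (hlim.const_sub (∫ s, ψ s ∂ σ0))
  simpa using this
end

section
/- Main theorem (autocratic strategies in arbitrary action spaces): Let S_X and S_Y be measurable spaces with bounded measurable payoff functions u_X, u_Y : S_X × S_Y → ℝ, let λ ∈ (0,1), let σ_X be a memory-one strategy for player X with initial action σ_X^0, and let α, β, γ ∈ ℝ. Suppose there is a bounded measurable function ψ : S_X → ℝ such that for every x ∈ S_X and y ∈ S_Y: α·u_X(x,y) + β·u_Y(x,y) + γ = ψ(x) − λ·∫_{S_X} ψ(s) dσ_X[x,y](s) − (1−λ)·∫_{S_X} ψ(s) dσ_X^0(s). Then for every play sequence (ν_t)_{t≥0} compatible with (σ_X^0, σ_X), the expected discounted payoffs satisfy α·π_X + β·π_Y + γ = 0. -/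
open MeasureTheory ProbabilityTheory

private lemma aux_integrable {Ω : Type*} [MeasurableSpace Ω] (μ : Measure Ω)
    [IsProbabilityMeasure μ] (f : Ω → ℝ) (hfm : Measurable f) (D : ℝ)
    (hfb : ∀ q, |f q| ≤ D) : Integrable f μ :=
  ⟨hfm.aestronglyMeasurable, HasFiniteIntegral.of_bounded (C := D) (ae_of_all _ hfb)⟩

private lemma aux_bound {Ω : Type*} [MeasurableSpace Ω] (μ : Measure Ω)
    [IsProbabilityMeasure μ] (f : Ω → ℝ) (D : ℝ) (hfb : ∀ q, |f q| ≤ D) :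
    |∫ q, f q ∂ μ| ≤ D := by
  rw [← Real.norm_eq_abs]
  calc ‖∫ q, f q ∂ μ‖ ≤ D * (μ Set.univ).toReal :=
        norm_integral_le_of_norm_le_const
          (ae_of_all _ (fun q => (Real.norm_eq_abs _).trans_le (hfb q)))
    _ = D := by simp

/-- **Main theorem: autocratic strategies in arbitrary action spaces.**
If a bounded measurable scaling function `ψ` satisfies the Press–Dyson relation
`α·u_X(x,y) + β·u_Y(x,y) + γ = ψ(x) − lam·∫ ψ dσX[x,y] − (1−lam)·∫ ψ dσ0`
for all `x, y`, then for every play sequence `ν` compatible with `(σ0, σX)` the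
expected discounted payoffs satisfy `α·π_X + β·π_Y + γ = 0`. -/
theorem autocratic_strategies
    {SX SY : Type*} [MeasurableSpace SX] [MeasurableSpace SY]
    (uX uY : SX × SY → ℝ) (huXm : Measurable uX) (huYm : Measurable uY)
    (C : ℝ) (huXb : ∀ q, |uX q| ≤ C) (huYb : ∀ q, |uY q| ≤ C)
    (lam : ℝ) (hlam : lam ∈ Set.Ioo (0 : ℝ) 1)
    (σX : Kernel (SX × SY) SX) [IsMarkovKernel σX]
    (σ0 : Measure SX) [IsProbabilityMeasure σ0]
    (α β γ : ℝ)
    (ψ : SX → ℝ) (hψm : Measurable ψ) (Cψ : ℝ) (hψb : ∀ s, |ψ s| ≤ Cψ)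
    (hPD : ∀ x y, α * uX (x, y) + β * uY (x, y) + γ =
      ψ x - lam * ∫ s, ψ s ∂ (σX (x, y)) - (1 - lam) * ∫ s, ψ s ∂ σ0)
    (ν : ℕ → Measure (SX × SY)) (hνp : ∀ t, IsProbabilityMeasure (ν t))
    (hν0 : ∀ E : Set SX, MeasurableSet E → ν 0 (E ×ˢ Set.univ) = σ0 E)
    (hνsucc : ∀ t : ℕ, ∀ E : Set SX, MeasurableSet E →
      ν (t + 1) (E ×ˢ Set.univ) = ∫⁻ q, σX q E ∂ ν t) :
    α * ((1 - lam) * ∑' t : ℕ, lam ^ t * ∫ q, uX q ∂ ν t)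
      + β * ((1 - lam) * ∑' t : ℕ, lam ^ t * ∫ q, uY q ∂ ν t) + γ = 0 := by
  obtain ⟨hl0, hl1⟩ := hlam
  have hlne : (1 : ℝ) - lam ≠ 0 := by linarith
  -- basic data
  set IX : ℕ → ℝ := fun t => ∫ q, uX q ∂ ν t with hIX
  set IY : ℕ → ℝ := fun t => ∫ q, uY q ∂ ν t with hIY
  set a : ℕ → ℝ := fun t => ∫ q, ψ q.1 ∂ ν t with ha
  set c : ℝ := ∫ s, ψ s ∂ σ0 with hc
  haveI := hνp
  have hCψ0 : 0 ≤ Cψ := le_trans (abs_nonneg _) (aux_bound (ν 0) _ Cψ (fun q => hψb q.1))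
  have hC0 : 0 ≤ C := le_trans (abs_nonneg _) (aux_bound (ν 0) uX C huXb)
  -- the kernel integral of ψ
  set B : SX × SY → ℝ := fun q => ∫ s, ψ s ∂ σX q with hB
  have hBm : Measurable B := by
    have : StronglyMeasurable fun q => ∫ s, ψ s ∂ σX q :=
      (hψm.stronglyMeasurable.comp_measurable measurable_snd).integral_kernel_prod_right'
        (κ := σX)
    exact this.measurable
  have hBb : ∀ q, |B q| ≤ Cψ := by
    intro q
    show |∫ s, ψ s ∂ σX q| ≤ Cψ
    exact aux_bound (σX q) ψ Cψ hψb
  -- a 0 = c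
  have hmap0 : (ν 0).map Prod.fst = σ0 := by
    ext E hE
    rw [Measure.map_apply measurable_fst hE, ← Set.prod_univ, hν0 E hE]
  have ha0 : a 0 = c := by
    rw [hc, ← hmap0, integral_map measurable_fst.aemeasurable hψm.aestronglyMeasurable]
  -- recursion: a (t+1) = ∫ B ∂ ν t
  have harec : ∀ t, a (t + 1) = ∫ q, B q ∂ ν t := by
    intro t
    have hmaps : (ν (t + 1)).map Prod.fst = ((ν t) ⊗ₘ σX).map Prod.snd := by
      ext E hE
      rw [Measure.map_apply measurable_fst hE, Measure.map_apply measurable_snd hE,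
        Measure.compProd_apply (measurable_snd hE), ← Set.prod_univ, hνsucc t E hE]
      congr 1
    have h1 : a (t + 1) = ∫ s, ψ s ∂ ((ν (t + 1)).map Prod.fst) := by
      rw [integral_map measurable_fst.aemeasurable hψm.aestronglyMeasurable]
    have h2 : ∫ s, ψ s ∂ (((ν t) ⊗ₘ σX).map Prod.snd) = ∫ p, ψ p.2 ∂ ((ν t) ⊗ₘ σX) := by
      rw [integral_map measurable_snd.aemeasurable hψm.aestronglyMeasurable]
    have hiI : Integrable (fun p : (SX × SY) × SX => ψ p.2) ((ν t) ⊗ₘ σX) :=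
      aux_integrable _ _ (hψm.comp measurable_snd) Cψ (fun q => hψb q.2)
    rw [h1, hmaps, h2, Measure.integral_compProd hiI]
  -- per-step identity
  have hstep : ∀ t, α * IX t + β * IY t + γ = a t - lam * a (t + 1) - (1 - lam) * c := by
    intro t
    have hiX := aux_integrable (ν t) uX huXm C huXb
    have hiY := aux_integrable (ν t) uY huYm C huYb
    have hiψ := aux_integrable (ν t) (fun q => ψ q.1) (hψm.comp measurable_fst) Cψ (fun q => hψb q.1)
    have hiB := aux_integrable (ν t) B hBm Cψ hBb
    have key : ∫ q, (α * uX q + β * uY q + γ) ∂ ν t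
        = ∫ q, (ψ q.1 - lam * B q - (1 - lam) * c) ∂ ν t := by
      refine integral_congr_ae (ae_of_all _ fun q => ?_)
      simpa using hPD q.1 q.2
    have hL : ∫ q, (α * uX q + β * uY q + γ) ∂ ν t = α * IX t + β * IY t + γ := by
      have h1 : Integrable (fun q => α * uX q + β * uY q) (ν t) :=
        (hiX.const_mul α).add (hiY.const_mul β)
      rw [integral_add h1 (integrable_const γ),
        integral_add (hiX.const_mul α) (hiY.const_mul β),
        integral_const_mul, integral_const_mul]
      simp
      rfl
    have hR : ∫ q, (ψ q.1 - lam * B q - (1 - lam) * c) ∂ ν t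
        = a t - lam * a (t + 1) - (1 - lam) * c := by
      have h2 : Integrable (fun q => ψ q.1 - lam * B q) (ν t) :=
        hiψ.sub (hiB.const_mul lam)
      rw [integral_sub h2 (integrable_const _),
        integral_sub hiψ (hiB.const_mul lam), integral_const_mul, integral_const]
      rw [harec t]
      simp
      rfl
    rw [← hL, key, hR]
  -- summability
  have hgeom : Summable fun t : ℕ => lam ^ t := summable_geometric_of_lt_one hl0.le hl1
  have hsum : ∀ (f : ℕ → ℝ) (D : ℝ), (∀ t, |f t| ≤ D) →
      Summable fun t : ℕ => lam ^ t * f t := by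
    intro f D hf
    refine Summable.of_norm_bounded (hgeom.mul_left D) fun t => ?_
    rw [Real.norm_eq_abs, abs_mul, abs_pow, abs_of_pos hl0, mul_comm D]
    exact mul_le_mul_of_nonneg_left (hf t) (pow_nonneg hl0.le t)
  have hsX : Summable fun t => lam ^ t * IX t :=
    hsum IX C fun t => aux_bound (ν t) uX C huXb
  have hsY : Summable fun t => lam ^ t * IY t :=
    hsum IY C fun t => aux_bound (ν t) uY C huYb
  have hab : ∀ t, |a t| ≤ Cψ := fun t => aux_bound (ν t) _ Cψ (fun q => hψb q.1)
  have hsa : Summable fun t => lam ^ t * a t := hsum a Cψ hab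
  have hsa' : Summable fun t => lam ^ t * a (t + 1) := hsum _ Cψ fun t => hab (t + 1)
  -- shift identity
  have hshift : lam * ∑' t, lam ^ t * a (t + 1) = (∑' t, lam ^ t * a t) - a 0 := by
    have h0 : (∑' t, lam ^ t * a t) = a 0 + ∑' t, lam ^ (t + 1) * a (t + 1) := by
      simpa using Summable.tsum_eq_zero_add hsa
    have h1 : (∑' t, lam ^ (t + 1) * a (t + 1)) = lam * ∑' t, lam ^ t * a (t + 1) := by
      rw [← tsum_mul_left]
      exact tsum_congr fun t => by ring
    rw [h0, h1]; ring
  -- key tsum computation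
  have hkey : (∑' t, lam ^ t * (α * IX t + β * IY t + γ)) = 0 := by
    have he : ∀ t : ℕ, lam ^ t * (α * IX t + β * IY t + γ)
        = lam ^ t * a t - lam * (lam ^ t * a (t + 1)) - ((1 - lam) * c) * lam ^ t := by
      intro t
      rw [hstep t]; ring
    calc (∑' t, lam ^ t * (α * IX t + β * IY t + γ))
        = ∑' t, (lam ^ t * a t - lam * (lam ^ t * a (t + 1)) - ((1 - lam) * c) * lam ^ t) :=
          tsum_congr he
      _ = (∑' t, (lam ^ t * a t - lam * (lam ^ t * a (t + 1))))
            - ∑' t, ((1 - lam) * c) * lam ^ t := by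
          exact Summable.tsum_sub (hsa.sub (hsa'.mul_left lam)) (hgeom.mul_left _)
      _ = ((∑' t, lam ^ t * a t) - lam * ∑' t, lam ^ t * a (t + 1))
            - (1 - lam) * c * (1 - lam)⁻¹ := by
          rw [Summable.tsum_sub hsa (hsa'.mul_left lam), tsum_mul_left, tsum_mul_left,
            tsum_geometric_of_lt_one hl0.le hl1]
      _ = 0 := by
          rw [hshift, ha0]
          field_simp
          ring
  -- split the key tsum
  have hsplit : (∑' t, lam ^ t * (α * IX t + β * IY t + γ))
      = α * ∑' t, lam ^ t * IX t + β * ∑' t, lam ^ t * IY t + γ * (1 - lam)⁻¹ := by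
    have he : ∀ t : ℕ, lam ^ t * (α * IX t + β * IY t + γ)
        = α * (lam ^ t * IX t) + β * (lam ^ t * IY t) + γ * lam ^ t := by
      intro t; ring
    rw [tsum_congr he,
      Summable.tsum_add ((hsX.mul_left α).add (hsY.mul_left β)) (hgeom.mul_left γ),
      Summable.tsum_add (hsX.mul_left α) (hsY.mul_left β), tsum_mul_left, tsum_mul_left,
      tsum_mul_left, tsum_geometric_of_lt_one hl0.le hl1]
  have hfin : α * ∑' t, lam ^ t * IX t + β * ∑' t, lam ^ t * IY t + γ * (1 - lam)⁻¹ = 0 := by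
    rw [← hsplit, hkey]
  have := congrArg (fun x => (1 - lam) * x) hfin
  simp only [mul_zero] at this
  calc α * ((1 - lam) * ∑' t, lam ^ t * IX t) + β * ((1 - lam) * ∑' t, lam ^ t * IY t) + γ
      = (1 - lam) * (α * ∑' t, lam ^ t * IX t + β * ∑' t, lam ^ t * IY t + γ * (1 - lam)⁻¹) := by
        field_simp
    _ = 0 := by rw [hfin, mul_zero]
end

section
/- Two-point autocratic strategies: Let S_X and S_Y be measurable spaces with bounded measurable payoff functions u_X, u_Y : S_X × S_Y → ℝ, let λ ∈ (0,1), and let α, β, γ ∈ ℝ. Write f(x,y) = α·u_X(x,y) + β·u_Y(x,y) + γ. Suppose there exist s_1, s_2 ∈ S_X, φ > 0, and p_0 ∈ [0,1] such that for every y ∈ S_Y: −(1 − (1−λ)p_0)/φ ≤ f(s_1,y) ≤ −(1−λ)(1−p_0)/φ and (1−λ)p_0/φ ≤ f(s_2,y) ≤ (λ + (1−λ)p_0)/φ. Define p(s_1,y) = (1/λ)(φ·f(s_1,y) − (1−λ)p_0 + 1) and p(s_2,y) = (1/λ)(φ·f(s_2,y) − (1−λ)p_0). Then 0 ≤ p(x,y)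 ≤ 1 for x ∈ {s_1, s_2} and all y ∈ S_Y, and the memory-one strategy σ_X[x,y] = p(x,y)·δ_{s_1} + (1 − p(x,y))·δ_{s_2} with initial action σ_X^0 = p_0·δ_{s_1} + (1−p_0)·δ_{s_2} satisfies: for every play sequence (ν_t)_{t≥0} compatible with (σ_X^0, σ_X), α·π_X + β·π_Y + γ = 0. -/
set_option maxHeartbeats 1000000


open MeasureTheory ProbabilityTheory

/-- **Two-point autocratic strategies.** Writing `f(x,y) = α·u_X(x,y) + β·u_Y(x,y) + γ`,
if there are actions `s₁, s₂`, a scalar `φ > 0`, and an initial probability `p₀ ∈ [0,1]`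
such that `−(1−(1−lam)p₀)/φ ≤ f(s₁,y) ≤ −(1−lam)(1−p₀)/φ` and
`(1−lam)p₀/φ ≤ f(s₂,y) ≤ (lam+(1−lam)p₀)/φ` for all `y`, then the reaction
probabilities `p(s₁,y) = (1/lam)(φ f(s₁,y) − (1−lam)p₀ + 1)` and
`p(s₂,y) = (1/lam)(φ f(s₂,y) − (1−lam)p₀)` lie in `[0,1]`, and the two-point
memory-one strategy `σX[x,y] = p(x,y)·δ_{s₁} + (1−p(x,y))·δ_{s₂}` with initial action
`σ0 = p₀·δ_{s₁} + (1−p₀)·δ_{s₂}` enforces `α·π_X + β·π_Y + γ = 0`. -/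
theorem two_point_autocratic_strategies
    {SX SY : Type*} [MeasurableSpace SX] [MeasurableSingletonClass SX]
    [MeasurableSpace SY]
    (uX uY : SX × SY → ℝ) (huXm : Measurable uX) (huYm : Measurable uY)
    (C : ℝ) (huXb : ∀ q, |uX q| ≤ C) (huYb : ∀ q, |uY q| ≤ C)
    (lam : ℝ) (hlam : lam ∈ Set.Ioo (0 : ℝ) 1)
    (α β γ : ℝ)
    (f : SX → SY → ℝ) (hf : ∀ x y, f x y = α * uX (x, y) + β * uY (x, y) + γ)
    (s₁ s₂ : SX) (φ : ℝ) (hφ : 0 < φ) (p₀ : ℝ) (hp₀ : p₀ ∈ Set.Icc (0 : ℝ) 1)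
    (hineq₁ : ∀ y, -(1 - (1 - lam) * p₀) / φ ≤ f s₁ y ∧
      f s₁ y ≤ -((1 - lam) * (1 - p₀)) / φ)
    (hineq₂ : ∀ y, (1 - lam) * p₀ / φ ≤ f s₂ y ∧
      f s₂ y ≤ (lam + (1 - lam) * p₀) / φ)
    (p : SX → SY → ℝ)
    (hp₁ : ∀ y, p s₁ y = (1 / lam) * (φ * f s₁ y - (1 - lam) * p₀ + 1))
    (hp₂ : ∀ y, p s₂ y = (1 / lam) * (φ * f s₂ y - (1 - lam) * p₀))
    (σX : Kernel (SX × SY) SX)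
    (hσX : ∀ x ∈ ({s₁, s₂} : Set SX), ∀ y, σX (x, y) =
      ENNReal.ofReal (p x y) • Measure.dirac s₁
        + ENNReal.ofReal (1 - p x y) • Measure.dirac s₂)
    (σ0 : Measure SX)
    (hσ0 : σ0 = ENNReal.ofReal p₀ • Measure.dirac s₁
        + ENNReal.ofReal (1 - p₀) • Measure.dirac s₂) :
    (∀ x ∈ ({s₁, s₂} : Set SX), ∀ y, 0 ≤ p x y ∧ p x y ≤ 1) ∧
    (∀ ν : ℕ → Measure (SX × SY), (∀ t, IsProbabilityMeasure (ν t)) →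
      (∀ E : Set SX, MeasurableSet E → ν 0 (E ×ˢ Set.univ) = σ0 E) →
      (∀ t : ℕ, ∀ E : Set SX, MeasurableSet E →
        ν (t + 1) (E ×ˢ Set.univ) = ∫⁻ q, σX q E ∂ ν t) →
      α * ((1 - lam) * ∑' t : ℕ, lam ^ t * ∫ q, uX q ∂ ν t)
        + β * ((1 - lam) * ∑' t : ℕ, lam ^ t * ∫ q, uY q ∂ ν t) + γ = 0) := by
  classical
  obtain ⟨hl0, hl1⟩ := hlam
  have h1l : (0:ℝ) < 1 - lam := by linarith
  have h1lne : (1:ℝ) - lam ≠ 0 := h1l.ne'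
  -- Part 1 : probabilities in [0,1]
  have hpbound : ∀ x ∈ ({s₁, s₂} : Set SX), ∀ y, 0 ≤ p x y ∧ p x y ≤ 1 := by
    intro x hx y
    simp only [Set.mem_insert_iff, Set.mem_singleton_iff] at hx
    rcases hx with rfl | rfl
    · obtain ⟨h1, h2⟩ := hineq₁ y
      rw [div_le_iff₀ hφ] at h1
      rw [le_div_iff₀ hφ] at h2
      rw [hp₁ y]
      constructor
      · apply mul_nonneg (by positivity)
        nlinarith
      · rw [one_div, ← div_eq_inv_mul, div_le_one hl0]
        nlinarith
    · obtain ⟨h1, h2⟩ := hineq₂ y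
      rw [div_le_iff₀ hφ] at h1
      rw [le_div_iff₀ hφ] at h2
      rw [hp₂ y]
      constructor
      · apply mul_nonneg (by positivity)
        nlinarith
      · rw [one_div, ← div_eq_inv_mul, div_le_one hl0]
        nlinarith
  refine ⟨hpbound, ?_⟩
  intro ν hν h0 hstep
  haveI := hν 0
  -- nonemptiness and s₁ ≠ s₂
  have hne : Nonempty (SX × SY) := by
    by_contra h
    have h1 : (ν 0) Set.univ = 1 := measure_univ
    rw [Set.univ_eq_empty_iff.mpr (not_nonempty_iff.mp h), measure_empty] at h1
    exact zero_ne_one h1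
  obtain ⟨x0, y0⟩ := hne.some
  have hs : s₁ ≠ s₂ := by
    intro h
    have e1 := hp₁ y0
    have e2 := hp₂ y0
    rw [h] at e1
    rw [e1] at e2
    have hlne : lam ≠ 0 := hl0.ne'
    field_simp at e2
    linarith
  have hs' : s₂ ≠ s₁ := hs.symm
  -- basic measurable sets and functions
  have hABm : MeasurableSet ({s₁, s₂} : Set SX) := (measurableSet_singleton s₂).insert s₁
  have hS1m : MeasurableSet (({s₁} : Set SX) ×ˢ (Set.univ : Set SY)) :=
    (measurableSet_singleton s₁).prod MeasurableSet.univ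
  set F' : SX × SY → ℝ := fun q => α * uX q + β * uY q + γ with hF'def
  have hF'm : Measurable F' := ((huXm.const_mul α).add (huYm.const_mul β)).add_const γ
  have hsetm : MeasurableSet {q : SX × SY | q.1 = s₁} :=
    measurable_fst (measurableSet_singleton s₁)
  set P : SX × SY → ℝ :=
    fun q => (1/lam) * (φ * F' q - (1-lam)*p₀ + (if q.1 = s₁ then (1:ℝ) else 0)) with hPdef
  have hPm : Measurable P :=
    (((hF'm.const_mul φ).sub_const ((1-lam)*p₀)).add
      (Measurable.ite hsetm measurable_const measurable_const)).const_mul (1/lam)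
  -- P agrees with p on the support
  have hPeq : ∀ q : SX × SY, q.1 ∈ ({s₁, s₂} : Set SX) → P q = p q.1 q.2 := by
    intro q hq
    simp only [Set.mem_insert_iff, Set.mem_singleton_iff] at hq
    rcases hq with h | h
    · have hq1 : ((s₁ : SX), q.2) = q := by rw [← h]
      rw [show p q.1 q.2 = p s₁ q.2 from by rw [h], hp₁ q.2, hf s₁ q.2, hq1]
      simp only [hPdef, hF'def]
      rw [if_pos h]
    · have hq1 : ((s₂ : SX), q.2) = q := by rw [← h]
      have hne1 : ¬ (q.1 = s₁) := by rw [h]; exact hs'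
      rw [show p q.1 q.2 = p s₂ q.2 from by rw [h], hp₂ q.2, hf s₂ q.2, hq1]
      simp only [hPdef, hF'def]
      rw [if_neg hne1, add_zero]
  -- support lemma
  have hsetC : {q : SX × SY | ¬ q.1 ∈ ({s₁, s₂} : Set SX)}
      = (({s₁, s₂} : Set SX)ᶜ) ×ˢ (Set.univ : Set SY) := by
    ext q; simp
  have hsupp : ∀ t, ν t ((({s₁, s₂} : Set SX)ᶜ) ×ˢ (Set.univ : Set SY)) = 0 := by
    intro t
    induction t with
    | zero =>
        rw [h0 _ hABm.compl, hσ0]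
        simp [Measure.dirac_apply, Set.indicator_apply]
    | succ t ih =>
        rw [hstep t _ hABm.compl]
        have hae' : ∀ᵐ q ∂ ν t, q.1 ∈ ({s₁, s₂} : Set SX) := by
          rw [ae_iff, hsetC]; exact ih
        have : ∫⁻ q, σX q (({s₁, s₂} : Set SX)ᶜ) ∂ ν t = ∫⁻ _, 0 ∂ ν t := by
          apply lintegral_congr_ae
          filter_upwards [hae'] with q hq
          rw [show σX q = _ from hσX q.1 hq q.2]
          simp [Measure.dirac_apply, Set.indicator_apply]
        rw [this, lintegral_zero]
  have hae : ∀ t, ∀ᵐ q ∂ ν t, q.1 ∈ ({s₁, s₂} : Set SX) := by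
    intro t; rw [ae_iff, hsetC]; exact hsupp t
  -- Q t : probability of playing s₁ at time t
  set Q : ℕ → ℝ := fun t => (ν t (({s₁} : Set SX) ×ˢ (Set.univ : Set SY))).toReal with hQdef
  have hQ01 : ∀ t, 0 ≤ Q t ∧ Q t ≤ 1 := by
    intro t
    haveI := hν t
    refine ⟨ENNReal.toReal_nonneg, ?_⟩
    have hto : ((ν t) (({s₁} : Set SX) ×ˢ (Set.univ : Set SY))).toReal ≤ (1 : ENNReal).toReal :=
      ENNReal.toReal_mono ENNReal.one_ne_top prob_le_one
    simpa [hQdef] using hto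
  -- P is a.e. in [0,1], integrable
  have haeP : ∀ t, ∀ᵐ q ∂ ν t, 0 ≤ P q ∧ P q ≤ 1 := by
    intro t
    filter_upwards [hae t] with q hq
    rw [hPeq q hq]
    exact hpbound q.1 hq q.2
  have hPint : ∀ t, Integrable P (ν t) := by
    intro t
    haveI := hν t
    refine Integrable.mono' (integrable_const 1) hPm.aestronglyMeasurable ?_
    filter_upwards [haeP t] with q hq
    rw [Real.norm_eq_abs, abs_le]
    exact ⟨by linarith [hq.1], hq.2⟩
  have hPnn : ∀ t, 0 ≤ᶠ[ae (ν t)] P := by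
    intro t; filter_upwards [haeP t] with q hq; exact hq.1
  -- key recursion : Q (t+1) = ∫ P ∂ ν t
  have hkey : ∀ t, Q (t+1) = ∫ q, P q ∂ ν t := by
    intro t
    have hint0 : (0:ℝ) ≤ ∫ q, P q ∂ ν t := integral_nonneg_of_ae (hPnn t)
    have h1 : ν (t+1) (({s₁} : Set SX) ×ˢ (Set.univ : Set SY))
        = ENNReal.ofReal (∫ q, P q ∂ ν t) := by
      rw [hstep t _ (measurableSet_singleton s₁),
        ofReal_integral_eq_lintegral_ofReal (hPint t) (hPnn t)]
      apply lintegral_congr_ae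
      filter_upwards [hae t] with q hq
      rw [show σX q = _ from hσX q.1 hq q.2, hPeq q hq]
      simp [Measure.dirac_apply, Set.indicator_apply, hs']
    simp only [hQdef, h1, ENNReal.toReal_ofReal hint0]
  -- indicator integral
  have hind : ∀ t, ∫ q, (if (q : SX × SY).1 = s₁ then (1:ℝ) else 0) ∂ ν t = Q t := by
    intro t
    have heq : (fun q : SX × SY => if q.1 = s₁ then (1:ℝ) else 0)
        = Set.indicator (({s₁} : Set SX) ×ˢ (Set.univ : Set SY)) (fun _ => (1:ℝ)) := by
      ext q
      rw [Set.indicator_apply]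
      by_cases h : q.1 = s₁
      · rw [if_pos h, if_pos (show q ∈ (({s₁} : Set SX) ×ˢ (Set.univ : Set SY)) from
          ⟨h, Set.mem_univ _⟩)]
      · rw [if_neg h, if_neg (fun hq => h hq.1)]
    rw [heq, integral_indicator_const (1:ℝ) hS1m]
    simp [hQdef]
    rfl
  have hIind : ∀ t, Integrable (fun q : SX × SY => if q.1 = s₁ then (1:ℝ) else 0) (ν t) := by
    intro t
    haveI := hν t
    refine Integrable.mono' (integrable_const 1)
      (Measurable.ite hsetm measurable_const measurable_const).aestronglyMeasurable ?_
    apply ae_of_all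
    intro q
    by_cases h : q.1 = s₁ <;> simp [h]
  -- the balance equation
  have hFt : ∀ t, φ * (∫ q, F' q ∂ ν t) = lam * Q (t+1) + (1-lam)*p₀ - Q t := by
    intro t
    haveI := hν t
    have hid : ∀ q : SX × SY, F' q
        = (1/φ) * (lam * P q + (1-lam)*p₀ - (if q.1 = s₁ then (1:ℝ) else 0)) := by
      intro q
      simp only [hPdef]
      field_simp
      ring
    have e1 : ∫ q, F' q ∂ ν t
        = (1/φ) * (lam * (∫ q, P q ∂ ν t) + (1-lam)*p₀ - Q t) := by
      rw [show (fun q => F' q) = fun q : SX × SY =>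
          (1/φ) * (lam * P q + (1-lam)*p₀ - (if q.1 = s₁ then (1:ℝ) else 0)) from funext hid]
      rw [integral_const_mul]
      congr 1
      have hint1 : Integrable (fun q : SX × SY => lam * P q + (1-lam)*p₀) (ν t) := by
        exact ((hPint t).const_mul lam).add (integrable_const _)
      have hint2 : Integrable (fun q : SX × SY => lam * P q) (ν t) := (hPint t).const_mul lam
      rw [integral_sub hint1 (hIind t), integral_add hint2 (integrable_const ((1-lam)*p₀)),
        integral_const_mul, integral_const, hind t]
      simp [measure_univ]
    rw [e1, hkey t]
    field_simp
  -- integral of F' in terms of payoffs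
  have hIX : ∀ t, Integrable uX (ν t) := by
    intro t; haveI := hν t
    refine Integrable.mono' (integrable_const C) huXm.aestronglyMeasurable ?_
    exact ae_of_all _ fun q => by rw [Real.norm_eq_abs]; exact huXb q
  have hIY : ∀ t, Integrable uY (ν t) := by
    intro t; haveI := hν t
    refine Integrable.mono' (integrable_const C) huYm.aestronglyMeasurable ?_
    exact ae_of_all _ fun q => by rw [Real.norm_eq_abs]; exact huYb q
  have hG : ∀ t, ∫ q, F' q ∂ ν t
      = α * (∫ q, uX q ∂ ν t) + β * (∫ q, uY q ∂ ν t) + γ := by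
    intro t
    haveI := hν t
    simp only [hF'def]
    have hint1 : Integrable (fun q : SX × SY => α * uX q + β * uY q) (ν t) := by
      exact ((hIX t).const_mul α).add ((hIY t).const_mul β)
    have hint2 : Integrable (fun q : SX × SY => α * uX q) (ν t) := (hIX t).const_mul α
    have hint3 : Integrable (fun q : SX × SY => β * uY q) (ν t) := (hIY t).const_mul β
    rw [integral_add hint1 (integrable_const γ), integral_add hint2 hint3,
      integral_const_mul, integral_const_mul, integral_const]
    simp [measure_univ]
  -- summability facts
  have hgeom : Summable (fun t : ℕ => lam ^ t) := summable_geometric_of_lt_one hl0.le hl1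
  have hpow : ∀ t : ℕ, (0:ℝ) ≤ lam ^ t := fun t => pow_nonneg hl0.le t
  have sQ : Summable (fun t => lam ^ t * Q t) := by
    refine Summable.of_nonneg_of_le
      (fun t => mul_nonneg (hpow t) (hQ01 t).1) (fun t => ?_) hgeom
    calc lam ^ t * Q t ≤ lam ^ t * 1 := mul_le_mul_of_nonneg_left (hQ01 t).2 (hpow t)
      _ = lam ^ t := mul_one _
  have sQ' : Summable (fun t => lam ^ (t+1) * Q (t+1)) := (summable_nat_add_iff 1).2 sQ
  have hbound : ∀ (g : SX × SY → ℝ), Measurable g → (∀ q, |g q| ≤ C) →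
      Summable (fun t => lam ^ t * ∫ q, g q ∂ ν t) := by
    intro g hgm hgb
    apply Summable.of_abs
    refine Summable.of_nonneg_of_le (fun t => abs_nonneg _) (fun t => ?_) (hgeom.mul_right C)
    haveI := hν t
    have h1 : ‖∫ q, g q ∂ ν t‖ ≤ C * ((ν t) Set.univ).toReal :=
      norm_integral_le_of_norm_le_const (ae_of_all _ fun q => by
        rw [Real.norm_eq_abs]; exact hgb q)
    rw [measure_univ, ENNReal.toReal_one, mul_one, Real.norm_eq_abs] at h1
    rw [abs_mul, abs_pow, abs_of_pos hl0]
    exact mul_le_mul_of_nonneg_left h1 (hpow t)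
  have sX : Summable (fun t => lam ^ t * ∫ q, uX q ∂ ν t) := hbound uX huXm huXb
  have sY : Summable (fun t => lam ^ t * ∫ q, uY q ∂ ν t) := hbound uY huYm huYb
  -- Q 0 = p₀
  have hQ0 : Q 0 = p₀ := by
    simp only [hQdef]
    rw [h0 _ (measurableSet_singleton s₁), hσ0]
    simp [Measure.dirac_apply, Set.indicator_apply, hs']
    exact hp₀.1
  -- telescoping
  have hshift : ∑' t, lam ^ (t+1) * Q (t+1) = (∑' t, lam ^ t * Q t) - Q 0 := by
    have h := Summable.tsum_eq_zero_add sQ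
    simp only [pow_zero, one_mul] at h
    linarith [h]
  -- the combined sum vanishes
  have hterm : ∀ t, lam ^ t * (∫ q, F' q ∂ ν t)
      = (1/φ) * (lam ^ (t+1) * Q (t+1) - lam ^ t * Q t + lam ^ t * ((1-lam)*p₀)) := by
    intro t
    have h := hFt t
    field_simp
    linear_combination lam ^ t * h
  have sC : Summable (fun t : ℕ => lam ^ t * ((1-lam)*p₀)) := hgeom.mul_right _
  have E2 : ∑' t, lam ^ t * (∫ q, F' q ∂ ν t) = 0 := by
    calc ∑' t, lam ^ t * (∫ q, F' q ∂ ν t)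
        = ∑' t, (1/φ) * (lam ^ (t+1) * Q (t+1) - lam ^ t * Q t + lam ^ t * ((1-lam)*p₀)) :=
          tsum_congr hterm
      _ = (1/φ) * ∑' t, (lam ^ (t+1) * Q (t+1) - lam ^ t * Q t + lam ^ t * ((1-lam)*p₀)) :=
          tsum_mul_left
      _ = (1/φ) * ((∑' t, (lam ^ (t+1) * Q (t+1) - lam ^ t * Q t))
            + ∑' t, lam ^ t * ((1-lam)*p₀)) := by
          rw [Summable.tsum_add (sQ'.sub sQ) sC]
      _ = (1/φ) * (((∑' t, lam ^ (t+1) * Q (t+1)) - ∑' t, lam ^ t * Q t)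
            + (∑' t : ℕ, lam ^ t) * ((1-lam)*p₀)) := by
          rw [Summable.tsum_sub sQ' sQ, tsum_mul_right]
      _ = 0 := by
          rw [hshift, hQ0, tsum_geometric_of_lt_one hl0.le hl1]
          field_simp
          ring
  have E1 : ∑' t, lam ^ t * (∫ q, F' q ∂ ν t)
      = α * (∑' t, lam ^ t * ∫ q, uX q ∂ ν t)
        + β * (∑' t, lam ^ t * ∫ q, uY q ∂ ν t) + γ * (1-lam)⁻¹ := by
    calc ∑' t, lam ^ t * (∫ q, F' q ∂ ν t)
        = ∑' t, (α * (lam ^ t * ∫ q, uX q ∂ ν t)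
            + β * (lam ^ t * ∫ q, uY q ∂ ν t) + γ * lam ^ t) := by
          apply tsum_congr
          intro t
          rw [hG t]
          ring
      _ = α * (∑' t, lam ^ t * ∫ q, uX q ∂ ν t)
            + β * (∑' t, lam ^ t * ∫ q, uY q ∂ ν t) + γ * (1-lam)⁻¹ := by
          rw [Summable.tsum_add ((sX.mul_left α).add (sY.mul_left β)) (hgeom.mul_left γ),
            Summable.tsum_add (sX.mul_left α) (sY.mul_left β),
            tsum_mul_left, tsum_mul_left, tsum_mul_left,
            tsum_geometric_of_lt_one hl0.le hl1]
  have key2 : α * (∑' t, lam ^ t * ∫ q, uX q ∂ ν t)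
      + β * (∑' t, lam ^ t * ∫ q, uY q ∂ ν t) + γ * (1-lam)⁻¹ = 0 := E1.symm.trans E2
  have hγ : γ * (1-lam)⁻¹ * (1-lam) = γ := by field_simp
  linear_combination (1-lam) * key2 - hγ
end

section
/- Deterministic autocratic strategies: Let S_X and S_Y be measurable spaces with bounded measurable payoff functions u_X, u_Y : S_X × S_Y → ℝ, let λ ∈ (0,1), let α, β, γ ∈ ℝ, let r : S_X × S_Y → S_X be a measurable reaction function, let x_0 ∈ S_X, and let ψ : S_X → ℝ be a bounded measurable function. Suppose that for every x ∈ S_X and y ∈ S_Y: α·u_X(x,y) + β·u_Y(x,y) + γ = ψ(x) − λ·ψ(r(x,y)) − (1−λ)·ψ(x_0). Then the memory-one strategy σ_X[x,y] = δ_{r(x,y)} with initial action σ_X^0 = δ_{x_0} satisfies: for every play sequence (ν_t)_{t≥0} compatible with (σ_X^0, σ_X), α·π_X + β·π_Y + γ = 0. -/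
open MeasureTheory ProbabilityTheory

/-- **Deterministic autocratic strategies.** If a measurable reaction function
`r : S_X × S_Y → S_X`, initial action `x₀`, and bounded measurable `ψ` satisfy
`α·u_X(x,y) + β·u_Y(x,y) + γ = ψ(x) − lam·ψ(r(x,y)) − (1−lam)·ψ(x₀)` for all
`x, y`, then the deterministic memory-one strategy `σX[x,y] = δ_{r(x,y)}` with
initial action `δ_{x₀}` enforces `α·π_X + β·π_Y + γ = 0` against every play
sequence compatible with it. -/
theorem deterministic_autocratic_strategies
    {SX SY : Type*} [MeasurableSpace SX] [MeasurableSingletonClass SX]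
    [MeasurableSpace SY]
    (uX uY : SX × SY → ℝ) (huXm : Measurable uX) (huYm : Measurable uY)
    (C : ℝ) (huXb : ∀ q, |uX q| ≤ C) (huYb : ∀ q, |uY q| ≤ C)
    (lam : ℝ) (hlam : lam ∈ Set.Ioo (0 : ℝ) 1)
    (α β γ : ℝ)
    (r : SX × SY → SX) (hr : Measurable r) (x₀ : SX)
    (ψ : SX → ℝ) (hψm : Measurable ψ) (Cψ : ℝ) (hψb : ∀ s, |ψ s| ≤ Cψ)
    (hPD : ∀ x y, α * uX (x, y) + β * uY (x, y) + γ =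
      ψ x - lam * ψ (r (x, y)) - (1 - lam) * ψ x₀)
    (σX : Kernel (SX × SY) SX) (hσX : ∀ q, σX q = Measure.dirac (r q))
    (σ0 : Measure SX) (hσ0 : σ0 = Measure.dirac x₀)
    (ν : ℕ → Measure (SX × SY)) (hνp : ∀ t, IsProbabilityMeasure (ν t))
    (hν0 : ∀ E : Set SX, MeasurableSet E → ν 0 (E ×ˢ Set.univ) = σ0 E)
    (hνsucc : ∀ t : ℕ, ∀ E : Set SX, MeasurableSet E →
      ν (t + 1) (E ×ˢ Set.univ) = ∫⁻ q, σX q E ∂ ν t) :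
    α * ((1 - lam) * ∑' t : ℕ, lam ^ t * ∫ q, uX q ∂ ν t)
      + β * ((1 - lam) * ∑' t : ℕ, lam ^ t * ∫ q, uY q ∂ ν t) + γ = 0 := by
  obtain ⟨hl0, hl1⟩ := hlam
  have hl1' : (1:ℝ) - lam ≠ 0 := by linarith
  -- integrability helper
  have hint : ∀ (t : ℕ) (g : SX × SY → ℝ), Measurable g → ∀ D : ℝ, (∀ q, |g q| ≤ D) →
      Integrable g (ν t) := by
    intro t g hg D hD
    haveI := hνp t
    exact ⟨hg.aestronglyMeasurable,
      HasFiniteIntegral.of_bounded (C := D) (ae_of_all _ hD)⟩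
  have hψcomp : Measurable fun q : SX × SY => ψ q.1 := hψm.comp measurable_fst
  have hψr : Measurable fun q : SX × SY => ψ (r q) := hψm.comp hr
  set a : ℕ → ℝ := fun t => ∫ q, uX q ∂ ν t with ha
  set b : ℕ → ℝ := fun t => ∫ q, uY q ∂ ν t with hb
  set f : ℕ → ℝ := fun t => ∫ q, ψ q.1 ∂ ν t with hf
  have hmap0 : (ν 0).map Prod.fst = Measure.dirac x₀ := by
    ext E hE
    rw [Measure.map_apply measurable_fst hE, ← Set.prod_univ, hν0 E hE, hσ0]
  have hf0 : f 0 = ψ x₀ := by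
    rw [hf]
    simp only
    rw [← integral_map (μ := ν 0) measurable_fst.aemeasurable hψm.aestronglyMeasurable,
      hmap0, integral_dirac]
  have hmaps : ∀ t, (ν (t+1)).map Prod.fst = (ν t).map r := by
    intro t
    ext E hE
    rw [Measure.map_apply measurable_fst hE, Measure.map_apply hr hE,
        ← Set.prod_univ, hνsucc t E hE]
    have hpt : ∀ q, σX q E = (r ⁻¹' E).indicator (fun _ => (1:ENNReal)) q := by
      intro q
      rw [hσX q, Measure.dirac_apply' _ hE]
      by_cases h : r q ∈ E <;> simp [Set.indicator_apply, h]
    simp_rw [hpt]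
    rw [lintegral_indicator_const (hr hE), one_mul]
  have hfs : ∀ t, f (t+1) = ∫ q, ψ (r q) ∂ ν t := by
    intro t
    rw [hf]
    simp only
    rw [← integral_map (μ := ν (t+1)) measurable_fst.aemeasurable hψm.aestronglyMeasurable,
        hmaps t, integral_map hr.aemeasurable hψm.aestronglyMeasurable]
  have hstep : ∀ t, α * a t + β * b t + γ = f t - lam * f (t+1) - (1-lam) * ψ x₀ := by
    intro t
    haveI := hνp t
    have h1 : Integrable uX (ν t) := hint t uX huXm C huXb
    have h2 : Integrable uY (ν t) := hint t uY huYm C huYb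
    have h3 : Integrable (fun q : SX × SY => ψ q.1) (ν t) :=
      hint t _ hψcomp Cψ (fun q => hψb _)
    have h4 : Integrable (fun q : SX × SY => ψ (r q)) (ν t) :=
      hint t _ hψr Cψ (fun q => hψb _)
    have key : ∫ q, (α * uX q + β * uY q + γ) ∂ ν t
        = ∫ q, (ψ q.1 - lam * ψ (r q) - (1-lam) * ψ x₀) ∂ ν t := by
      congr 1
      funext q
      have := hPD q.1 q.2
      simpa using this
    have hadd : Integrable (fun q : SX × SY => α * uX q + β * uY q) (ν t) :=
      (h1.const_mul α).add (h2.const_mul β)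
    have hsub : Integrable (fun q : SX × SY => ψ q.1 - lam * ψ (r q)) (ν t) :=
      h3.sub (h4.const_mul lam)
    rw [hfs t]
    calc α * a t + β * b t + γ
        = ∫ q, (α * uX q + β * uY q + γ) ∂ ν t := by
          rw [integral_add hadd (integrable_const γ),
              integral_add (h1.const_mul α) (h2.const_mul β),
              integral_const_mul, integral_const_mul, integral_const]
          simp [ha, hb]
      _ = ∫ q, (ψ q.1 - lam * ψ (r q) - (1-lam) * ψ x₀) ∂ ν t := key
      _ = f t - lam * (∫ q, ψ (r q) ∂ ν t) - (1-lam) * ψ x₀ := by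
          rw [integral_sub hsub (integrable_const ((1-lam) * ψ x₀)),
              integral_sub h3 (h4.const_mul lam), integral_const_mul, integral_const]
          simp [hf]
  -- bounds
  have hbound : ∀ (t : ℕ) (g : SX × SY → ℝ) (D : ℝ), (∀ q, |g q| ≤ D) →
      |∫ q, g q ∂ ν t| ≤ D := by
    intro t g D hD
    haveI := hνp t
    rw [← Real.norm_eq_abs]
    calc ‖∫ q, g q ∂ ν t‖ ≤ D * ((ν t) Set.univ).toReal := by
          refine norm_integral_le_of_norm_le_const (ae_of_all _ fun q => ?_)
          simpa using hD q
      _ = D := by simp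
  have hab : ∀ t, |a t| ≤ C := fun t => hbound t uX C huXb
  have hbb : ∀ t, |b t| ≤ C := fun t => hbound t uY C huYb
  have hfb : ∀ t, |f t| ≤ Cψ := fun t => hbound t _ Cψ (fun q => hψb _)
  have hgeo : Summable (fun t : ℕ => lam ^ t) :=
    summable_geometric_of_lt_one hl0.le hl1
  have hsum : ∀ (g : ℕ → ℝ) (D : ℝ), (∀ t, |g t| ≤ D) →
      Summable (fun t => lam ^ t * g t) := by
    intro g D hD
    apply Summable.of_norm_bounded (hgeo.mul_left D)
    intro t
    rw [norm_mul, Real.norm_eq_abs, Real.norm_eq_abs, abs_pow, abs_of_pos hl0, mul_comm]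
    exact mul_le_mul_of_nonneg_right (hD t) (pow_nonneg hl0.le t)
  have hA : Summable (fun t => lam ^ t * a t) := hsum a C hab
  have hB : Summable (fun t => lam ^ t * b t) := hsum b C hbb
  have hF : Summable (fun t => lam ^ t * f t) := hsum f Cψ hfb
  have hF' : Summable (fun t => lam ^ t * f (t+1)) :=
    hsum (fun t => f (t+1)) Cψ (fun t => hfb _)
  have hG : ∑' t : ℕ, lam ^ t = (1 - lam)⁻¹ :=
    tsum_geometric_of_lt_one hl0.le hl1
  have hshift : ∑' t : ℕ, lam ^ t * (lam * f (t+1))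
      = (∑' t : ℕ, lam ^ t * f t) - f 0 := by
    have h1 : ∀ t : ℕ, lam ^ t * (lam * f (t+1)) = lam ^ (t+1) * f (t+1) := by
      intro t; ring
    simp_rw [h1]
    have := Summable.tsum_eq_zero_add hF
    simp only [pow_zero, one_mul] at this
    linarith
  have hFsucc : Summable (fun t : ℕ => lam ^ t * (lam * f (t+1))) := by
    have : (fun t : ℕ => lam ^ t * (lam * f (t+1)))
        = fun t => lam * (lam ^ t * f (t+1)) := by funext t; ring
    rw [this]
    exact hF'.mul_left lam
  -- main summation identity
  have key : α * (∑' t : ℕ, lam ^ t * a t) + β * (∑' t : ℕ, lam ^ t * b t)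
      + γ * (1 - lam)⁻¹ = 0 := by
    have e1 : (fun t : ℕ => lam ^ t * (α * a t + β * b t + γ))
        = fun t => (α * (lam ^ t * a t) + β * (lam ^ t * b t)) + γ * lam ^ t := by
      funext t; ring
    have e2 : (fun t : ℕ => lam ^ t * (f t - lam * f (t+1) - (1-lam) * ψ x₀))
        = fun t => (lam ^ t * f t - lam ^ t * (lam * f (t+1)))
          - ((1-lam) * ψ x₀) * lam ^ t := by
      funext t; ring
    have heq : (fun t : ℕ => lam ^ t * (α * a t + β * b t + γ))
        = fun t : ℕ => lam ^ t * (f t - lam * f (t+1) - (1-lam) * ψ x₀) := by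
      funext t; rw [hstep t]
    have lhs : ∑' t : ℕ, lam ^ t * (α * a t + β * b t + γ)
        = α * (∑' t : ℕ, lam ^ t * a t) + β * (∑' t : ℕ, lam ^ t * b t)
          + γ * (1 - lam)⁻¹ := by
      rw [e1, Summable.tsum_add (((hA.mul_left α)).add (hB.mul_left β)) (hgeo.mul_left γ),
          Summable.tsum_add (hA.mul_left α) (hB.mul_left β),
          tsum_mul_left, tsum_mul_left, tsum_mul_left, hG]
    have rhs : ∑' t : ℕ, lam ^ t * (f t - lam * f (t+1) - (1-lam) * ψ x₀)
        = f 0 - ψ x₀ := by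
      rw [e2, Summable.tsum_sub (hF.sub hFsucc) (hgeo.mul_left ((1-lam) * ψ x₀)),
          Summable.tsum_sub hF hFsucc, hshift, tsum_mul_left, hG]
      field_simp
      ring
    rw [← lhs, heq, rhs, hf0]
    ring
  have hfin : α * ((1 - lam) * ∑' t : ℕ, lam ^ t * a t)
      + β * ((1 - lam) * ∑' t : ℕ, lam ^ t * b t) + γ
      = (1 - lam) * (α * (∑' t : ℕ, lam ^ t * a t)
        + β * (∑' t : ℕ, lam ^ t * b t) + γ * (1 - lam)⁻¹) := by
    field_simp
  rw [hfin, key, mul_zero]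
end

section
/- Two-point extortionate/generous strategies in the continuous Donation Game: In the continuous Donation Game, let χ ≥ 1, 0 ≤ κ ≤ b(K) − c(K), and let λ ∈ (0,1) satisfy λ ≥ (b(K) + χ·c(K)) / (χ·b(K) + c(K)). Let p_0 ∈ [0,1] satisfy max{ ((χ−1)κ − λ(χ·b(K)+c(K)) + (b(K)+χ·c(K))) / ((1−λ)(χ·b(K)+c(K))), 0 } ≤ p_0 ≤ min{ (χ−1)κ / ((1−λ)(χ·b(K)+c(K))), 1 }. Define, for y ∈ [0,K], p(y) = (1/λ)·( (b(y) + χ·c(y) + (χ−1)κ) / (χ·b(K) + c(K)) − (1−λ)·p_0 ). Then 0 ≤ p(y) ≤ 1 for every y ∈ [0,K], and the memory-one strategy σ_X[x,y] = (1 − p(y))·δ_0 + p(y)·δ_K with initial action σ_X^0 = (1−p_0)·δ_0 + p_0·δ_K satisfies: for every play sequence (ν_t)_{t≥0} compatible with (σ_X^0, σ_X), the expected discounted payoffs satisfy π_X − κ = χ·(π_Y − κ). -/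
open MeasureTheory ProbabilityTheory

private lemma aux_integrable_s9 {α : Type*} [MeasurableSpace α] {μ : Measure α}
    [IsFiniteMeasure μ] {f : α → ℝ} (hf : Measurable f) {M : ℝ} (hM : ∀ x, |f x| ≤ M) :
    Integrable f μ :=
  (integrable_const M).mono' hf.aestronglyMeasurable
    (Filter.Eventually.of_forall fun x => by simpa [Real.norm_eq_abs] using hM x)

private lemma aux_integrable_dirac {α : Type*} [MeasurableSpace α] {f : α → ℝ}
    (hf : Measurable f) (a : α) : Integrable f (Measure.dirac a) :=
  ⟨hf.aestronglyMeasurable, by simp [HasFiniteIntegral, lintegral_dirac' _ hf.enorm]⟩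

private lemma aux_integral_two_point {α : Type*} [MeasurableSpace α]
    [MeasurableSingletonClass α] {f : α → ℝ} (hf : Measurable f) (z w : α) {r : ℝ}
    (hr0 : 0 ≤ r) (hr1 : r ≤ 1) :
    ∫ x, f x ∂(ENNReal.ofReal (1 - r) • Measure.dirac z + ENNReal.ofReal r • Measure.dirac w)
      = (1 - r) * f z + r * f w := by
  rw [integral_add_measure ((aux_integrable_dirac hf z).smul_measure ENNReal.ofReal_ne_top)
      ((aux_integrable_dirac hf w).smul_measure ENNReal.ofReal_ne_top),
    integral_smul_measure, integral_smul_measure, integral_dirac, integral_dirac,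
    ENNReal.toReal_ofReal (by linarith), ENNReal.toReal_ofReal hr0]
  simp [smul_eq_mul]

set_option maxHeartbeats 1000000 in
/-- **Two-point extortionate/generous strategies in the continuous Donation Game.**
With action space `[0,K]`, nondecreasing benefit/cost functions `b, c` with
`b(0)=c(0)=0` and `b(s) > c(s)` for `s > 0`, payoffs `u_X(x,y) = b(y) − c(x)` and
`u_Y(x,y) = b(x) − c(y)`: for `χ ≥ 1`, `0 ≤ κ ≤ b(K) − c(K)`, a discount factor
`lam ≥ (b(K)+χc(K))/(χb(K)+c(K))`, and a feasible initial cooperation probability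
`p₀`, the reaction probability
`p(y) = (1/lam)((b(y)+χc(y)+(χ−1)κ)/(χb(K)+c(K)) − (1−lam)p₀)` lies in `[0,1]`,
and the two-point strategy `σX[x,y] = (1−p(y))·δ₀ + p(y)·δ_K` with initial action
`(1−p₀)·δ₀ + p₀·δ_K` enforces `π_X − κ = χ(π_Y − κ)`. -/
theorem donation_two_point_extortion
    (K : ℝ) (hK : 0 < K)
    (b c : Set.Icc (0 : ℝ) K → ℝ) (hbm : Monotone b) (hcm : Monotone c)
    (hbmeas : Measurable b) (hcmeas : Measurable c)
    (zero top : Set.Icc (0 : ℝ) K) (hzero : (zero : ℝ) = 0) (htop : (top : ℝ) = K)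
    (hb0 : b zero = 0) (hc0 : c zero = 0)
    (hbc : ∀ s : Set.Icc (0 : ℝ) K, 0 < (s : ℝ) → c s < b s)
    (χ : ℝ) (hχ : 1 ≤ χ) (κ : ℝ) (hκ : 0 ≤ κ ∧ κ ≤ b top - c top)
    (lam : ℝ) (hlam : lam ∈ Set.Ioo (0 : ℝ) 1)
    (hlam' : (b top + χ * c top) / (χ * b top + c top) ≤ lam)
    (p₀ : ℝ) (hp₀ : p₀ ∈ Set.Icc (0 : ℝ) 1)
    (hp₀l : max (((χ - 1) * κ - lam * (χ * b top + c top) + (b top + χ * c top))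
        / ((1 - lam) * (χ * b top + c top))) 0 ≤ p₀)
    (hp₀u : p₀ ≤ min (((χ - 1) * κ) / ((1 - lam) * (χ * b top + c top))) 1)
    (p : Set.Icc (0 : ℝ) K → ℝ)
    (hp : ∀ y, p y = (1 / lam) *
      ((b y + χ * c y + (χ - 1) * κ) / (χ * b top + c top) - (1 - lam) * p₀))
    (σX : Kernel (Set.Icc (0 : ℝ) K × Set.Icc (0 : ℝ) K) (Set.Icc (0 : ℝ) K))
    (hσX : ∀ x y, σX (x, y) =
      ENNReal.ofReal (1 - p y) • Measure.dirac zero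
        + ENNReal.ofReal (p y) • Measure.dirac top)
    (σ0 : Measure (Set.Icc (0 : ℝ) K))
    (hσ0 : σ0 = ENNReal.ofReal (1 - p₀) • Measure.dirac zero
        + ENNReal.ofReal p₀ • Measure.dirac top) :
    (∀ y, 0 ≤ p y ∧ p y ≤ 1) ∧
    (∀ ν : ℕ → Measure (Set.Icc (0 : ℝ) K × Set.Icc (0 : ℝ) K),
      (∀ t, IsProbabilityMeasure (ν t)) →
      (∀ E : Set (Set.Icc (0 : ℝ) K), MeasurableSet E →
        ν 0 (E ×ˢ Set.univ) = σ0 E) →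
      (∀ t : ℕ, ∀ E : Set (Set.Icc (0 : ℝ) K), MeasurableSet E →
        ν (t + 1) (E ×ˢ Set.univ) = ∫⁻ q, σX q E ∂ ν t) →
      ((1 - lam) * ∑' t : ℕ, lam ^ t * ∫ q, (b q.2 - c q.1) ∂ ν t) - κ
        = χ * (((1 - lam) * ∑' t : ℕ, lam ^ t * ∫ q, (b q.1 - c q.2) ∂ ν t) - κ)) := by
  obtain ⟨hl0, hl1⟩ := hlam
  have h1l : 0 < 1 - lam := by linarith
  have hzt : zero ≤ top := Subtype.coe_le_coe.mp (by rw [hzero, htop]; exact hK.le)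
  have hCnn : 0 ≤ c top := hc0 ▸ hcm hzt
  have hBC : c top < b top := hbc top (by rw [htop]; exact hK)
  have hBpos : 0 < b top := lt_of_le_of_lt hCnn hBC
  have hD : 0 < χ * b top + c top := by nlinarith
  have hzy : ∀ y : Set.Icc (0 : ℝ) K, zero ≤ y :=
    fun y => Subtype.coe_le_coe.mp (by rw [hzero]; exact y.2.1)
  have hyt : ∀ y : Set.Icc (0 : ℝ) K, y ≤ top :=
    fun y => Subtype.coe_le_coe.mp (by rw [htop]; exact y.2.2)
  have hby : ∀ y, 0 ≤ b y ∧ b y ≤ b top := fun y => ⟨hb0 ▸ hbm (hzy y), hbm (hyt y)⟩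
  have hcy : ∀ y, 0 ≤ c y ∧ c y ≤ c top := fun y => ⟨hc0 ▸ hcm (hzy y), hcm (hyt y)⟩
  have hp₀u' : p₀ * ((1 - lam) * (χ * b top + c top)) ≤ (χ - 1) * κ := by
    have h := le_trans hp₀u (min_le_left _ _)
    rwa [le_div_iff₀ (by positivity)] at h
  have hp₀l' : (χ - 1) * κ - lam * (χ * b top + c top) + (b top + χ * c top)
      ≤ p₀ * ((1 - lam) * (χ * b top + c top)) := by
    have h := le_trans (le_max_left _ _) hp₀l
    rwa [div_le_iff₀ (by positivity)] at h
  have hp01 : ∀ y, 0 ≤ p y ∧ p y ≤ 1 := by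
    intro y
    have hb' := hby y; have hc' := hcy y
    constructor
    · rw [hp]
      apply mul_nonneg (by positivity)
      have h : (1 - lam) * p₀ ≤ (b y + χ * c y + (χ - 1) * κ) / (χ * b top + c top) := by
        rw [le_div_iff₀ hD]; nlinarith [hc'.1, hb'.1]
      linarith
    · rw [hp]
      have hXle : (b y + χ * c y + (χ - 1) * κ) / (χ * b top + c top) - (1 - lam) * p₀
          ≤ lam := by
        rw [sub_le_iff_le_add, div_le_iff₀ hD]; nlinarith [hb'.2, hc'.2]
      have h2 := mul_le_mul_of_nonneg_left hXle (le_of_lt (by positivity : (0:ℝ) < 1 / lam))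
      have h3 : (1 / lam) * lam = 1 := by field_simp
      linarith
  refine ⟨hp01, ?_⟩
  intro ν hprob h0 hrec
  have hpmeas : Measurable p := by
    have hfe : p = fun y => (1 / lam) *
        ((b y + χ * c y + (χ - 1) * κ) / (χ * b top + c top) - (1 - lam) * p₀) := funext hp
    rw [hfe]; fun_prop
  -- integrability helpers
  have hIb1 : ∀ t, Integrable (fun x : _ × _ => b x.1) (ν t) := fun t => by
    haveI := hprob t
    exact aux_integrable_s9 (hbmeas.comp measurable_fst)
      (fun x => abs_le.mpr ⟨by linarith [(hby x.1).1], (hby x.1).2⟩)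
  have hIb2 : ∀ t, Integrable (fun x : _ × _ => b x.2) (ν t) := fun t => by
    haveI := hprob t
    exact aux_integrable_s9 (hbmeas.comp measurable_snd)
      (fun x => abs_le.mpr ⟨by linarith [(hby x.2).1], (hby x.2).2⟩)
  have hIc1 : ∀ t, Integrable (fun x : _ × _ => c x.1) (ν t) := fun t => by
    haveI := hprob t
    exact aux_integrable_s9 (hcmeas.comp measurable_fst)
      (fun x => abs_le.mpr ⟨by linarith [(hcy x.1).1], (hcy x.1).2⟩)
  have hIc2 : ∀ t, Integrable (fun x : _ × _ => c x.2) (ν t) := fun t => by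
    haveI := hprob t
    exact aux_integrable_s9 (hcmeas.comp measurable_snd)
      (fun x => abs_le.mpr ⟨by linarith [(hcy x.2).1], (hcy x.2).2⟩)
  have hIp : ∀ t, Integrable (fun x : _ × _ => p x.2) (ν t) := fun t => by
    haveI := hprob t
    exact aux_integrable_s9 (hpmeas.comp measurable_snd)
      (fun x => abs_le.mpr ⟨by linarith [(hp01 x.2).1], (hp01 x.2).2⟩)
  -- the cooperation probability sequence
  set r : ℕ → ℝ := fun t => Nat.rec p₀ (fun s _ => ∫ x, p x.2 ∂ ν s) t with hrdef
  have hr0 : r 0 = p₀ := rfl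
  have hrsucc : ∀ t, r (t + 1) = ∫ x, p x.2 ∂ ν t := fun t => rfl
  have hr01 : ∀ t, 0 ≤ r t ∧ r t ≤ 1 := by
    intro t
    cases t with
    | zero => exact ⟨hp₀.1, hp₀.2⟩
    | succ t =>
      haveI := hprob t
      rw [hrsucc]
      refine ⟨integral_nonneg (fun x => (hp01 x.2).1), ?_⟩
      calc ∫ x, p x.2 ∂ ν t ≤ ∫ _, (1:ℝ) ∂ ν t :=
            integral_mono (hIp t) (integrable_const 1) (fun x => (hp01 x.2).2)
        _ = 1 := by simp
  -- marginal two-point structure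
  have hmargE : ∀ t (E : Set (Set.Icc (0 : ℝ) K)), MeasurableSet E →
      ν t (E ×ˢ Set.univ)
        = (ENNReal.ofReal (1 - r t) • Measure.dirac zero
            + ENNReal.ofReal (r t) • Measure.dirac top) E := by
    intro t E hE
    cases t with
    | zero => rw [h0 E hE, hσ0]; rfl
    | succ t =>
      haveI := hprob t
      rw [hrec t E hE]
      have hσX' : ∀ x : Set.Icc (0:ℝ) K × Set.Icc (0:ℝ) K,
          (σX x) E = ENNReal.ofReal (1 - p x.2) * Measure.dirac zero E
            + ENNReal.ofReal (p x.2) * Measure.dirac top E := by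
        rintro ⟨x1, x2⟩
        rw [hσX x1 x2]
        simp [Measure.add_apply, Measure.smul_apply, smul_eq_mul]
      rw [lintegral_congr hσX']
      have hm1 : Measurable fun x : Set.Icc (0:ℝ) K × Set.Icc (0:ℝ) K =>
          ENNReal.ofReal (1 - p x.2) :=
        (measurable_const.sub (hpmeas.comp measurable_snd)).ennreal_ofReal
      have hm2 : Measurable fun x : Set.Icc (0:ℝ) K × Set.Icc (0:ℝ) K =>
          ENNReal.ofReal (p x.2) := (hpmeas.comp measurable_snd).ennreal_ofReal
      rw [lintegral_add_left (hm1.mul_const _), lintegral_mul_const _ hm1,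
        lintegral_mul_const _ hm2]
      have e2 : ∫⁻ x, ENNReal.ofReal (p x.2) ∂ ν t = ENNReal.ofReal (r (t+1)) := by
        rw [hrsucc]
        exact (ofReal_integral_eq_lintegral_ofReal (hIp t)
          (Filter.Eventually.of_forall fun x => (hp01 x.2).1)).symm
      have e1 : ∫⁻ x, ENNReal.ofReal (1 - p x.2) ∂ ν t = ENNReal.ofReal (1 - r (t+1)) := by
        have hI : Integrable (fun x : _ × _ => 1 - p x.2) (ν t) :=
          (integrable_const 1).sub (hIp t)
        have := (ofReal_integral_eq_lintegral_ofReal hI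
          (Filter.Eventually.of_forall fun x => by
            show (0:ℝ) ≤ 1 - p x.2
            linarith [(hp01 x.2).2])).symm
        rw [this, integral_sub (integrable_const 1) (hIp t), integral_const, hrsucc]
        simp
      rw [e1, e2]
      simp [Measure.add_apply, Measure.smul_apply, smul_eq_mul]
  -- integral of a function of the first coordinate
  have hfst : ∀ t (g : Set.Icc (0:ℝ) K → ℝ), Measurable g →
      ∫ x, g x.1 ∂ ν t = (1 - r t) * g zero + r t * g top := by
    intro t g hg
    have hmap : (ν t).map Prod.fst
        = ENNReal.ofReal (1 - r t) • Measure.dirac zero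
          + ENNReal.ofReal (r t) • Measure.dirac top := by
      refine Measure.ext fun E hE => ?_
      rw [Measure.map_apply measurable_fst hE, ← Set.prod_univ, hmargE t E hE]
    calc ∫ x, g x.1 ∂ ν t = ∫ y, g y ∂ ((ν t).map Prod.fst) :=
          (integral_map measurable_fst.aemeasurable hg.aestronglyMeasurable).symm
      _ = (1 - r t) * g zero + r t * g top := by
          rw [hmap]; exact aux_integral_two_point hg zero top (hr01 t).1 (hr01 t).2
  -- the key per-round identity
  have key : ∀ t, (∫ x, (b x.2 - c x.1) ∂ ν t) - χ * ∫ x, (b x.1 - c x.2) ∂ ν t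
      = (χ * b top + c top) * (lam * r (t+1)) - (χ * b top + c top) * r t
        + ((χ * b top + c top) * ((1 - lam) * p₀) - (χ - 1) * κ) := by
    intro t
    haveI := hprob t
    have hX : ∫ x, (b x.2 - c x.1) ∂ ν t
        = (∫ x, b x.2 ∂ ν t) - r t * c top := by
      rw [integral_sub (hIb2 t) (hIc1 t), hfst t c hcmeas, hc0]
      ring
    have hY : ∫ x, (b x.1 - c x.2) ∂ ν t
        = r t * b top - ∫ x, c x.2 ∂ ν t := by
      rw [integral_sub (hIb1 t) (hIc2 t), hfst t b hbmeas, hb0]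
      ring
    have hlr : lam * r (t+1)
        = ((∫ x, b x.2 ∂ ν t) + χ * (∫ x, c x.2 ∂ ν t) + (χ - 1) * κ)
            / (χ * b top + c top) - (1 - lam) * p₀ := by
      rw [hrsucc]
      have hcong : ∀ x : Set.Icc (0:ℝ) K × Set.Icc (0:ℝ) K, p x.2 = (1 / lam) *
          ((b x.2 + χ * c x.2 + (χ - 1) * κ) / (χ * b top + c top) - (1 - lam) * p₀) :=
        fun x => hp x.2
      have hI1 : Integrable (fun x : Set.Icc (0:ℝ) K × Set.Icc (0:ℝ) K =>
          b x.2 + χ * c x.2) (ν t) := by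
        exact (hIb2 t).add ((hIc2 t).const_mul χ)
      have hI2 : Integrable (fun x : Set.Icc (0:ℝ) K × Set.Icc (0:ℝ) K =>
          b x.2 + χ * c x.2 + (χ - 1) * κ) (ν t) := by
        exact hI1.add (integrable_const _)
      have hI3 : Integrable (fun x : Set.Icc (0:ℝ) K × Set.Icc (0:ℝ) K =>
          (b x.2 + χ * c x.2 + (χ - 1) * κ) / (χ * b top + c top)) (ν t) := hI2.div_const _
      rw [integral_congr_ae (Filter.Eventually.of_forall hcong), integral_const_mul,
        integral_sub hI3 (integrable_const _),
        integral_div, integral_add hI1 (integrable_const _),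
        integral_add (hIb2 t) ((hIc2 t).const_mul χ), integral_const_mul, integral_const]
      simp only [integral_const, probReal_univ, measure_univ, ENNReal.toReal_one, one_smul, smul_eq_mul]
      field_simp
    have hDlr : (χ * b top + c top) * (lam * r (t+1))
        = (∫ x, b x.2 ∂ ν t) + χ * (∫ x, c x.2 ∂ ν t) + (χ - 1) * κ
          - (χ * b top + c top) * ((1 - lam) * p₀) := by
      rw [hlr, mul_sub, mul_div_cancel₀ _ hD.ne']
    rw [hX, hY]
    linear_combination -hDlr
  -- summability
  have hgeo : Summable fun t : ℕ => lam ^ t := summable_geometric_of_lt_one hl0.le hl1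
  have habs : ∀ (u : ℕ → ℝ) (M : ℝ), (∀ t, |u t| ≤ M) →
      Summable fun t => lam ^ t * u t := by
    intro u M hM
    apply Summable.of_norm
    refine Summable.of_nonneg_of_le (fun t => norm_nonneg _) (fun t => ?_) (hgeo.mul_right M)
    rw [Real.norm_eq_abs, abs_mul, abs_pow, abs_of_pos hl0]
    exact mul_le_mul_of_nonneg_left (hM t) (by positivity)
  have hbound : ∀ t, |∫ x, (b x.2 - c x.1) ∂ ν t| ≤ b top + c top := by
    intro t
    haveI := hprob t
    have := norm_integral_le_of_norm_le_const (μ := ν t)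
      (f := fun x : Set.Icc (0:ℝ) K × Set.Icc (0:ℝ) K => b x.2 - c x.1) (C := b top + c top)
      (Filter.Eventually.of_forall fun x => by
        show ‖b x.2 - c x.1‖ ≤ b top + c top
        rw [Real.norm_eq_abs]
        have h1 := hby x.2; have h2 := hcy x.1
        rw [abs_le]; constructor <;> nlinarith)
    simpa [Real.norm_eq_abs] using this
  have hboundY : ∀ t, |∫ x, (b x.1 - c x.2) ∂ ν t| ≤ b top + c top := by
    intro t
    haveI := hprob t
    have := norm_integral_le_of_norm_le_const (μ := ν t)
      (f := fun x : Set.Icc (0:ℝ) K × Set.Icc (0:ℝ) K => b x.1 - c x.2) (C := b top + c top)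
      (Filter.Eventually.of_forall fun x => by
        show ‖b x.1 - c x.2‖ ≤ b top + c top
        rw [Real.norm_eq_abs]
        have h1 := hby x.1; have h2 := hcy x.2
        rw [abs_le]; constructor <;> nlinarith)
    simpa [Real.norm_eq_abs] using this
  have hsX : Summable fun t => lam ^ t * ∫ x, (b x.2 - c x.1) ∂ ν t :=
    habs _ (b top + c top) hbound
  have hsY : Summable fun t => lam ^ t * ∫ x, (b x.1 - c x.2) ∂ ν t :=
    habs _ (b top + c top) hboundY
  have hsq : Summable fun t => lam ^ t * r t :=
    habs _ 1 (fun t => abs_le.mpr ⟨by linarith [(hr01 t).1], (hr01 t).2⟩)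
  have hsq' : Summable fun t => lam ^ (t + 1) * r (t + 1) :=
    (summable_nat_add_iff 1).2 hsq
  -- shift identity
  have hTsub : ∑' t, lam ^ (t + 1) * r (t + 1) = (∑' t, lam ^ t * r t) - p₀ := by
    have h := Summable.tsum_eq_zero_add hsq
    rw [hr0] at h
    simp only [pow_zero, one_mul] at h
    linarith
  -- main sum computation
  have hterm : ∀ t, lam ^ t * (∫ x, (b x.2 - c x.1) ∂ ν t)
        - χ * (lam ^ t * ∫ x, (b x.1 - c x.2) ∂ ν t)
      = ((χ * b top + c top) * (lam ^ (t+1) * r (t+1))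
          - (χ * b top + c top) * (lam ^ t * r t))
        + ((χ * b top + c top) * ((1 - lam) * p₀) - (χ - 1) * κ) * lam ^ t := by
    intro t
    linear_combination lam ^ t * key t
  have hsum : (∑' t, lam ^ t * ∫ x, (b x.2 - c x.1) ∂ ν t)
      - χ * ∑' t, lam ^ t * ∫ x, (b x.1 - c x.2) ∂ ν t
      = -((χ - 1) * κ) / (1 - lam) := by
    rw [← tsum_mul_left, ← Summable.tsum_sub hsX (hsY.mul_left χ)]
    rw [tsum_congr hterm]
    rw [Summable.tsum_add ((hsq'.mul_left _).sub (hsq.mul_left _)) (hgeo.mul_left _)]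
    rw [Summable.tsum_sub (hsq'.mul_left _) (hsq.mul_left _), tsum_mul_left, tsum_mul_left, hTsub]
    have hgeoconst : ∑' t : ℕ, ((χ * b top + c top) * ((1 - lam) * p₀) - (χ - 1) * κ) * lam ^ t
        = ((χ * b top + c top) * ((1 - lam) * p₀) - (χ - 1) * κ) * (1 - lam)⁻¹ := by
      rw [tsum_mul_left, tsum_geometric_of_lt_one hl0.le hl1]
    rw [hgeoconst]
    field_simp
    ring
  have hsum' : (1 - lam) * ((∑' t, lam ^ t * ∫ x, (b x.2 - c x.1) ∂ ν t)
      - χ * ∑' t, lam ^ t * ∫ x, (b x.1 - c x.2) ∂ ν t) = -((χ - 1) * κ) := by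
    rw [hsum, mul_comm, div_mul_cancel₀ _ h1l.ne']
  linear_combination hsum'
end

section
/- Two-point equalizer strategies in the continuous Donation Game: In the continuous Donation Game, let 0 ≤ γ ≤ b(K) − c(K) and let λ ∈ (0,1) satisfy λ ≥ c(K)/b(K). Let p_0 ∈ [0,1] satisfy max{ (γ − λ·b(K) + c(K)) / ((1−λ)·b(K)), 0 } ≤ p_0 ≤ min{ γ / ((1−λ)·b(K)), 1 }. Define, for y ∈ [0,K], p(y) = (1/λ)·( (c(y) + γ)/b(K) − (1−λ)·p_0 ). Then 0 ≤ p(y) ≤ 1 for every y ∈ [0,K], and the memory-one strategy σ_X[x,y] = (1 − p(y))·δ_0 + p(y)·δ_K with initial action σ_X^0 = (1−p_0)·δ_0 + p_0·δ_K satisfies: for every play sequence (ν_t)_{t≥0} compatible with (σ_X^0, σ_X), the opponent's expected discounted payoff satisfies π_Y = γ. -/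
open MeasureTheory ProbabilityTheory

set_option maxHeartbeats 1000000 in
/-- **Two-point equalizer strategies in the continuous Donation Game.**
For `0 ≤ γ ≤ b(K) − c(K)`, a discount factor `lam ≥ c(K)/b(K)`, and a feasible
initial cooperation probability `p₀`, the reaction probability
`p(y) = (1/lam)((c(y)+γ)/b(K) − (1−lam)p₀)` lies in `[0,1]`, and the two-point
strategy `σX[x,y] = (1−p(y))·δ₀ + p(y)·δ_K` with initial action
`(1−p₀)·δ₀ + p₀·δ_K` enforces `π_Y = γ`. -/
theorem donation_two_point_equalizer
    (K : ℝ) (hK : 0 < K)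
    (b c : Set.Icc (0 : ℝ) K → ℝ) (hbm : Monotone b) (hcm : Monotone c)
    (hbmeas : Measurable b) (hcmeas : Measurable c)
    (zero top : Set.Icc (0 : ℝ) K) (hzero : (zero : ℝ) = 0) (htop : (top : ℝ) = K)
    (hb0 : b zero = 0) (hc0 : c zero = 0)
    (hbc : ∀ s : Set.Icc (0 : ℝ) K, 0 < (s : ℝ) → c s < b s)
    (γ : ℝ) (hγ : 0 ≤ γ ∧ γ ≤ b top - c top)
    (lam : ℝ) (hlam : lam ∈ Set.Ioo (0 : ℝ) 1)
    (hlam' : c top / b top ≤ lam)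
    (p₀ : ℝ) (hp₀ : p₀ ∈ Set.Icc (0 : ℝ) 1)
    (hp₀l : max ((γ - lam * b top + c top) / ((1 - lam) * b top)) 0 ≤ p₀)
    (hp₀u : p₀ ≤ min (γ / ((1 - lam) * b top)) 1)
    (p : Set.Icc (0 : ℝ) K → ℝ)
    (hp : ∀ y, p y = (1 / lam) * ((c y + γ) / b top - (1 - lam) * p₀))
    (σX : Kernel (Set.Icc (0 : ℝ) K × Set.Icc (0 : ℝ) K) (Set.Icc (0 : ℝ) K))
    (hσX : ∀ x y, σX (x, y) =
      ENNReal.ofReal (1 - p y) • Measure.dirac zero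
        + ENNReal.ofReal (p y) • Measure.dirac top)
    (σ0 : Measure (Set.Icc (0 : ℝ) K))
    (hσ0 : σ0 = ENNReal.ofReal (1 - p₀) • Measure.dirac zero
        + ENNReal.ofReal p₀ • Measure.dirac top) :
    (∀ y, 0 ≤ p y ∧ p y ≤ 1) ∧
    (∀ ν : ℕ → Measure (Set.Icc (0 : ℝ) K × Set.Icc (0 : ℝ) K),
      (∀ t, IsProbabilityMeasure (ν t)) →
      (∀ E : Set (Set.Icc (0 : ℝ) K), MeasurableSet E →
        ν 0 (E ×ˢ Set.univ) = σ0 E) →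
      (∀ t : ℕ, ∀ E : Set (Set.Icc (0 : ℝ) K), MeasurableSet E →
        ν (t + 1) (E ×ˢ Set.univ) = ∫⁻ q, σX q E ∂ ν t) →
      (1 - lam) * ∑' t : ℕ, lam ^ t * ∫ q, (b q.1 - c q.2) ∂ ν t = γ) := by
  obtain ⟨hγ0, hγ1⟩ := hγ
  obtain ⟨hlam0, hlam1⟩ := hlam
  obtain ⟨hp₀0, hp₀1⟩ := hp₀
  -- basic order facts
  have hbot : ∀ s : Set.Icc (0 : ℝ) K, zero ≤ s := by
    intro s
    exact Subtype.coe_le_coe.mp (by rw [hzero]; exact s.2.1)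
  have htopmax : ∀ s : Set.Icc (0 : ℝ) K, s ≤ top := by
    intro s
    exact Subtype.coe_le_coe.mp (by rw [htop]; exact s.2.2)
  have hcnn : ∀ s, 0 ≤ c s := fun s => hc0 ▸ hcm (hbot s)
  have hcle : ∀ s, c s ≤ c top := fun s => hcm (htopmax s)
  have hbnn : ∀ s, 0 ≤ b s := fun s => hb0 ▸ hbm (hbot s)
  have hble : ∀ s, b s ≤ b top := fun s => hbm (htopmax s)
  have hbK : 0 < b top := lt_of_le_of_lt (hcnn top) (hbc top (by rw [htop]; exact hK))
  have h1lam : 0 < 1 - lam := by linarith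
  -- translate the p₀ constraints
  have hub : p₀ * ((1 - lam) * b top) ≤ γ := by
    have h' : p₀ ≤ γ / ((1 - lam) * b top) := le_trans hp₀u (min_le_left _ _)
    exact (le_div_iff₀ (by positivity)).mp h'
  have hlb : γ - lam * b top + c top ≤ p₀ * ((1 - lam) * b top) := by
    have h' : (γ - lam * b top + c top) / ((1 - lam) * b top) ≤ p₀ :=
      le_trans (le_max_left _ _) hp₀l
    exact (div_le_iff₀ (by positivity)).mp h'
  -- Part 1
  have hpbounds : ∀ y, 0 ≤ p y ∧ p y ≤ 1 := by
    intro y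
    rw [hp y]
    constructor
    · apply mul_nonneg (by positivity)
      rw [sub_nonneg, le_div_iff₀ hbK]
      nlinarith [hcnn y]
    · have hA : (c y + γ) / b top - (1 - lam) * p₀ ≤ lam := by
        rw [sub_le_iff_le_add, div_le_iff₀ hbK]
        nlinarith [hcle y]
      calc 1 / lam * ((c y + γ) / b top - (1 - lam) * p₀) ≤ 1 / lam * lam := by
            apply mul_le_mul_of_nonneg_left hA (by positivity)
        _ = 1 := by field_simp
  refine ⟨hpbounds, ?_⟩
  intro ν hprob h0 hstep
  haveI : ∀ t, IsProbabilityMeasure (ν t) := hprob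
  have hztne : zero ≠ top := by
    intro h; rw [← Subtype.coe_inj, hzero, htop] at h; exact absurd h.symm (ne_of_gt hK)
  -- measurability
  have hmt : MeasurableSet ({top} : Set (Set.Icc (0:ℝ) K)) := measurableSet_singleton _
  have hmzt : MeasurableSet ({zero, top} : Set (Set.Icc (0:ℝ) K)) :=
    (measurableSet_singleton _).union (measurableSet_singleton _)
  have hσX' : ∀ q : Set.Icc (0:ℝ) K × Set.Icc (0:ℝ) K, σX q =
      ENNReal.ofReal (1 - p q.2) • Measure.dirac zero
        + ENNReal.ofReal (p q.2) • Measure.dirac top := fun q => hσX q.1 q.2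
  have hpmeas : Measurable p := by
    have : p = fun y => (1 / lam) * ((c y + γ) / b top - (1 - lam) * p₀) := funext hp
    rw [this]
    fun_prop
  -- integrability helpers
  have hcint : ∀ t, Integrable (fun q : Set.Icc (0:ℝ) K × Set.Icc (0:ℝ) K => c q.2) (ν t) := by
    intro t
    refine ⟨(hcmeas.comp measurable_snd).aestronglyMeasurable, ?_⟩
    apply HasFiniteIntegral.of_bounded (C := c top)
    filter_upwards with q
    rw [Real.norm_eq_abs, abs_of_nonneg (hcnn _)]
    exact hcle _
  have hbint : ∀ t, Integrable (fun q : Set.Icc (0:ℝ) K × Set.Icc (0:ℝ) K => b q.1) (ν t) := by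
    intro t
    refine ⟨(hbmeas.comp measurable_fst).aestronglyMeasurable, ?_⟩
    apply HasFiniteIntegral.of_bounded (C := b top)
    filter_upwards with q
    rw [Real.norm_eq_abs, abs_of_nonneg (hbnn _)]
    exact hble _
  have hpint : ∀ t, Integrable (fun q : Set.Icc (0:ℝ) K × Set.Icc (0:ℝ) K => p q.2) (ν t) := by
    intro t
    refine ⟨(hpmeas.comp measurable_snd).aestronglyMeasurable, ?_⟩
    apply HasFiniteIntegral.of_bounded (C := 1)
    filter_upwards with q
    rw [Real.norm_eq_abs, abs_of_nonneg (hpbounds _).1]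
    exact (hpbounds _).2
  -- concentration of the first marginal on {zero, top}
  have hconc : ∀ t, ν t (({zero, top}ᶜ : Set (Set.Icc (0:ℝ) K)) ×ˢ Set.univ) = 0 := by
    intro t
    cases t with
    | zero =>
      rw [h0 _ hmzt.compl, hσ0]
      simp [Measure.dirac_apply, hztne]
    | succ t =>
      rw [hstep t _ hmzt.compl]
      have : ∀ q : Set.Icc (0:ℝ) K × Set.Icc (0:ℝ) K,
          σX q ({zero, top}ᶜ : Set (Set.Icc (0:ℝ) K)) = 0 := by
        intro q
        rw [hσX' q]
        simp [Measure.dirac_apply, hztne]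
      simp only [this, lintegral_zero]
  have hae : ∀ t, ∀ᵐ q ∂ ν t, q.1 ∈ ({zero, top} : Set (Set.Icc (0:ℝ) K)) := by
    intro t
    rw [ae_iff]
    convert hconc t using 2
    ext q
    simp [Set.mem_prod]
  -- expected benefit from X
  set P : ℕ → ℝ := fun t => (ν t (({top} : Set (Set.Icc (0:ℝ) K)) ×ˢ Set.univ)).toReal with hP
  have hBint : ∀ t, ∫ q, b q.1 ∂ ν t = b top * P t := by
    intro t
    have : ∫ q, b q.1 ∂ ν t =
        ∫ q, Set.indicator (({top} : Set (Set.Icc (0:ℝ) K)) ×ˢ Set.univ)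
          (fun _ => b top) q ∂ ν t := by
      apply integral_congr_ae
      filter_upwards [hae t] with q hq
      rcases hq with hq | hq
      · have hnm : q ∉ (({top} : Set (Set.Icc (0:ℝ) K)) ×ˢ Set.univ) := by
          rw [Set.mem_prod]
          rintro ⟨h1, -⟩
          rw [Set.mem_singleton_iff] at h1
          exact hztne (hq.symm.trans h1)
        rw [Set.indicator_of_notMem hnm, hq, hb0]
      · rw [Set.mem_singleton_iff] at hq
        have hm : q ∈ (({top} : Set (Set.Icc (0:ℝ) K)) ×ˢ Set.univ) :=
          Set.mem_prod.mpr ⟨hq, Set.mem_univ _⟩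
        rw [Set.indicator_of_mem hm, hq]
    rw [this, integral_indicator_const _ (hmt.prod MeasurableSet.univ), smul_eq_mul, mul_comm]
    rfl
  -- initial condition
  have hP0 : P 0 = p₀ := by
    show (ν 0 (({top} : Set (Set.Icc (0:ℝ) K)) ×ˢ Set.univ)).toReal = p₀
    rw [h0 _ hmt, hσ0]
    simp [Measure.dirac_apply, hztne, ENNReal.toReal_ofReal hp₀0]
  -- recursion
  set C : ℕ → ℝ := fun t => ∫ q, c q.2 ∂ ν t with hC
  have hrec : ∀ t, P (t + 1) = ∫ q, p q.2 ∂ ν t := by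
    intro t
    show (ν (t+1) (({top} : Set (Set.Icc (0:ℝ) K)) ×ˢ Set.univ)).toReal = _
    rw [hstep t _ hmt]
    have h1 : ∀ q : Set.Icc (0:ℝ) K × Set.Icc (0:ℝ) K,
        σX q ({top} : Set (Set.Icc (0:ℝ) K)) = ENNReal.ofReal (p q.2) := by
      intro q
      rw [hσX' q]
      simp [Measure.dirac_apply, hztne]
    simp only [h1]
    rw [← ofReal_integral_eq_lintegral_ofReal (hpint t)
      (Filter.Eventually.of_forall fun q => (hpbounds _).1)]
    rw [ENNReal.toReal_ofReal (integral_nonneg fun q => (hpbounds _).1)]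
  have hint : ∀ t, ∫ q, p q.2 ∂ ν t = (1 / lam) * ((C t + γ) / b top - (1 - lam) * p₀) := by
    intro t
    have : (fun q : Set.Icc (0:ℝ) K × Set.Icc (0:ℝ) K => p q.2)
        = fun q => (1 / lam) * ((c q.2 + γ) / b top - (1 - lam) * p₀) := by
      funext q; exact hp q.2
    rw [this, integral_const_mul]
    congr 1
    rw [integral_sub _ (integrable_const _)]
    · rw [integral_const]
      simp only [probReal_univ, one_smul]
      congr 1
      rw [integral_div]
      congr 1
      rw [integral_add (hcint t) (integrable_const _), integral_const]
      simp [measure_univ]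
      rfl
    · exact (((hcint t).add (integrable_const _)).div_const _)
  -- key recursion in terms of B and C
  have hkey : ∀ t, lam * (b top * P (t + 1)) = C t + γ - (1 - lam) * p₀ * b top := by
    intro t
    rw [hrec t, hint t]
    field_simp
  -- bounds on P and C
  have hPnn : ∀ t, 0 ≤ P t := fun t => ENNReal.toReal_nonneg
  have hPle : ∀ t, P t ≤ 1 := by
    intro t
    show (ν t (({top} : Set (Set.Icc (0:ℝ) K)) ×ˢ Set.univ)).toReal ≤ 1
    have := ENNReal.toReal_mono ENNReal.one_ne_top
      (prob_le_one (μ := ν t) (s := (({top} : Set (Set.Icc (0:ℝ) K)) ×ˢ Set.univ)))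
    rwa [ENNReal.toReal_one] at this
  have hCnn : ∀ t, 0 ≤ C t := fun t => integral_nonneg fun q => hcnn _
  have hCle : ∀ t, C t ≤ c top := by
    intro t
    calc C t ≤ ∫ _q, c top ∂ ν t := integral_mono (hcint t) (integrable_const _) fun q => hcle _
      _ = c top := by simp [measure_univ]
  -- summability
  have hgeo : Summable (fun t : ℕ => lam ^ t) := summable_geometric_of_lt_one hlam0.le hlam1
  have hBsum : Summable (fun t : ℕ => lam ^ t * (b top * P t)) := by
    apply Summable.of_nonneg_of_le (fun t => by positivity)
      (fun t => ?_) (hgeo.mul_right (b top))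
    calc lam ^ t * (b top * P t) ≤ lam ^ t * (b top * 1) := by
          apply mul_le_mul_of_nonneg_left _ (by positivity)
          exact mul_le_mul_of_nonneg_left (hPle t) hbK.le
      _ = lam ^ t * b top := by ring
  have hCsum : Summable (fun t : ℕ => lam ^ t * C t) := by
    apply Summable.of_nonneg_of_le
      (fun t => mul_nonneg (by positivity) (hCnn t))
      (fun t => mul_le_mul_of_nonneg_left (hCle t) (by positivity))
      (hgeo.mul_right (c top))
  -- rewrite the integrand
  have hsplit : ∀ t, ∫ q, (b q.1 - c q.2) ∂ ν t = b top * P t - C t := by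
    intro t
    rw [integral_sub (hbint t) (hcint t), hBint t]
  -- final computation
  have hsum : ∑' t : ℕ, lam ^ t * ∫ q, (b q.1 - c q.2) ∂ ν t
      = b top * P 0 + (γ - (1 - lam) * p₀ * b top) * (1 - lam)⁻¹ := by
    have e1 : (fun t : ℕ => lam ^ t * ∫ q, (b q.1 - c q.2) ∂ ν t)
        = fun t => lam ^ t * (b top * P t) - lam ^ t * C t := by
      funext t; rw [hsplit t]; ring
    rw [e1, Summable.tsum_sub hBsum hCsum]
    rw [Summable.tsum_eq_zero_add hBsum]
    have hBsum' : Summable (fun t : ℕ => lam ^ (t + 1) * (b top * P (t + 1))) :=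
      (summable_nat_add_iff 1).mpr hBsum
    rw [add_sub_assoc, ← Summable.tsum_sub hBsum' hCsum]
    have e2 : (fun t : ℕ => lam ^ (t + 1) * (b top * P (t + 1)) - lam ^ t * C t)
        = fun t : ℕ => lam ^ t * (γ - (1 - lam) * p₀ * b top) := by
      funext t
      have := hkey t
      calc lam ^ (t + 1) * (b top * P (t + 1)) - lam ^ t * C t
          = lam ^ t * (lam * (b top * P (t + 1)) - C t) := by ring
        _ = lam ^ t * (γ - (1 - lam) * p₀ * b top) := by rw [this]; ring
    rw [e2, tsum_mul_right, tsum_geometric_of_lt_one hlam0.le hlam1]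
    simp [pow_zero, one_mul]
    ring
  rw [hsum, hP0]
  field_simp
  ring
end

section
/- Necessary range of the baseline payoff for extortion in the continuous Donation Game: In the continuous Donation Game, let χ > 1, κ ∈ ℝ, and λ ∈ (0,1]. Suppose there exist a bounded measurable function ψ : [0,K] → ℝ, a memory-one strategy σ_X, and an initial action σ_X^0 such that for every x, y ∈ [0,K]: (u_X(x,y) − κ) − χ·(u_Y(x,y) − κ) = ψ(x) − λ·∫ ψ(s) dσ_X[x,y](s) − (1−λ)·∫ ψ(s) dσ_X^0(s). Then 0 ≤ κ ≤ b(K) − c(K). -/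
open MeasureTheory ProbabilityTheory

/-- **Necessary range of the baseline payoff for extortion in the continuous Donation
Game.** If for `χ > 1` some bounded measurable `ψ`, memory-one strategy `σX`, and
initial action `σ0` satisfy the Press–Dyson relation
`(u_X(x,y) − κ) − χ(u_Y(x,y) − κ) = ψ(x) − lam·∫ ψ dσX[x,y] − (1−lam)·∫ ψ dσ0`
for all `x, y ∈ [0,K]`, then `0 ≤ κ ≤ b(K) − c(K)`. -/
theorem donation_extortion_baseline_range
    (K : ℝ) (hK : 0 < K)
    (b c : Set.Icc (0 : ℝ) K → ℝ) (hbm : Monotone b) (hcm : Monotone c)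
    (hbmeas : Measurable b) (hcmeas : Measurable c)
    (zero top : Set.Icc (0 : ℝ) K) (hzero : (zero : ℝ) = 0) (htop : (top : ℝ) = K)
    (hb0 : b zero = 0) (hc0 : c zero = 0)
    (hbc : ∀ s : Set.Icc (0 : ℝ) K, 0 < (s : ℝ) → c s < b s)
    (χ : ℝ) (hχ : 1 < χ) (κ : ℝ)
    (lam : ℝ) (hlam : lam ∈ Set.Ioc (0 : ℝ) 1)
    (ψ : Set.Icc (0 : ℝ) K → ℝ) (hψm : Measurable ψ) (Cψ : ℝ) (hψb : ∀ s, |ψ s| ≤ Cψ)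
    (σX : Kernel (Set.Icc (0 : ℝ) K × Set.Icc (0 : ℝ) K) (Set.Icc (0 : ℝ) K))
    [IsMarkovKernel σX]
    (σ0 : Measure (Set.Icc (0 : ℝ) K)) [IsProbabilityMeasure σ0]
    (hPD : ∀ x y : Set.Icc (0 : ℝ) K,
      ((b y - c x) - κ) - χ * ((b x - c y) - κ) =
        ψ x - lam * ∫ s, ψ s ∂ (σX (x, y)) - (1 - lam) * ∫ s, ψ s ∂ σ0) :
    0 ≤ κ ∧ κ ≤ b top - c top := by
  obtain ⟨hlam0, hlam1⟩ := hlam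
  have hne : Nonempty (Set.Icc (0 : ℝ) K) := ⟨zero⟩
  have hbdd : BddAbove (Set.range ψ) := by
    refine ⟨Cψ, ?_⟩; rintro _ ⟨s, rfl⟩; exact (abs_le.1 (hψb s)).2
  have hbddb : BddBelow (Set.range ψ) := by
    refine ⟨-Cψ, ?_⟩; rintro _ ⟨s, rfl⟩; exact (abs_le.1 (hψb s)).1
  set S : ℝ := ⨆ s, ψ s with hS
  set m : ℝ := ⨅ s, ψ s with hm
  have hψS : ∀ s, ψ s ≤ S := fun s => le_ciSup hbdd s
  have hmψ : ∀ s, m ≤ ψ s := fun s => ciInf_le hbddb s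
  -- integrability and integral bounds against any probability measure
  have hint : ∀ (μ : Measure (Set.Icc (0 : ℝ) K)) [IsProbabilityMeasure μ],
      Integrable ψ μ := by
    intro μ _
    exact (integrable_const Cψ).mono' hψm.aestronglyMeasurable (ae_of_all _ hψb)
  have hintS : ∀ (μ : Measure (Set.Icc (0 : ℝ) K)) [IsProbabilityMeasure μ],
      (∫ s, ψ s ∂ μ) ≤ S := by
    intro μ _
    calc (∫ s, ψ s ∂ μ) ≤ ∫ _, S ∂ μ :=
          integral_mono (hint μ) (integrable_const S) hψS
      _ = S := by simp
  have hintm : ∀ (μ : Measure (Set.Icc (0 : ℝ) K)) [IsProbabilityMeasure μ],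
      m ≤ (∫ s, ψ s ∂ μ) := by
    intro μ _
    calc m = ∫ _, m ∂ μ := by simp
      _ ≤ ∫ s, ψ s ∂ μ := integral_mono (integrable_const m) (hint μ) hmψ
  have hzx : ∀ x : Set.Icc (0 : ℝ) K, zero ≤ x := fun x => by
    rw [← Subtype.coe_le_coe, hzero]; exact x.2.1
  have hxt : ∀ x : Set.Icc (0 : ℝ) K, x ≤ top := fun x => by
    rw [← Subtype.coe_le_coe, htop]; exact x.2.2
  have hb0' : ∀ x, 0 ≤ b x := fun x => hb0 ▸ hbm (hzx x)
  have hc0' : ∀ x, 0 ≤ c x := fun x => hc0 ▸ hcm (hzx x)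
  constructor
  · -- use hPD x zero
    have key : ∀ x, ψ x ≤ κ * (χ - 1) + S := by
      intro x
      have h := hPD x zero
      have hR : ψ x - S ≤ ((b zero - c x) - κ) - χ * ((b x - c zero) - κ) := by
        rw [h]
        have h1 := hintS (σX (x, zero))
        have h2 := hintS σ0
        nlinarith [hlam0, hlam1]
      have hL : ((b zero - c x) - κ) - χ * ((b x - c zero) - κ) ≤ κ * (χ - 1) := by
        rw [hb0, hc0]
        nlinarith [hb0' x, hc0' x, hχ]
      linarith
    have : S ≤ κ * (χ - 1) + S := ciSup_le key
    have hκ : 0 ≤ κ * (χ - 1) := by linarith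
    nlinarith [hχ]
  · -- use hPD x top
    have key : ∀ x, (1 - χ) * ((b top - c top) - κ) + m ≤ ψ x := by
      intro x
      have h := hPD x top
      have hR : ((b top - c x) - κ) - χ * ((b x - c top) - κ) ≤ ψ x - m := by
        rw [h]
        have h1 := hintm (σX (x, top))
        have h2 := hintm σ0
        nlinarith [hlam0, hlam1]
      have hL : (1 - χ) * ((b top - c top) - κ) ≤
          ((b top - c x) - κ) - χ * ((b x - c top) - κ) := by
        have hcx : c x ≤ c top := hcm (hxt x)
        have hbx : b x ≤ b top := hbm (hxt x)
        nlinarith [hχ]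
      linarith
    have : (1 - χ) * ((b top - c top) - κ) + m ≤ m := le_ciInf key
    nlinarith [hχ]
end

section
/- Necessary range of the opponent's payoff for equalizer strategies in the continuous Donation Game: In the continuous Donation Game, let γ ∈ ℝ and λ ∈ (0,1]. Suppose there exist a bounded measurable function ψ : [0,K] → ℝ, a memory-one strategy σ_X, and an initial action σ_X^0 such that for every x, y ∈ [0,K]: u_Y(x,y) − γ = ψ(x) − λ·∫ ψ(s) dσ_X[x,y](s) − (1−λ)·∫ ψ(s) dσ_X^0(s). Then 0 ≤ γ ≤ b(K) − c(K). -/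
open MeasureTheory ProbabilityTheory

namespace DonationAux

variable {α : Type*} [MeasurableSpace α]

noncomputable def seqMeas (σ0 : Measure α) (κ : Kernel α α) : ℕ → Measure α
  | 0 => σ0
  | n + 1 => ((seqMeas σ0 κ n) ⊗ₘ κ).map Prod.snd

instance seqMeas_prob (σ0 : Measure α) [IsProbabilityMeasure σ0] (κ : Kernel α α)
    [IsMarkovKernel κ] (n : ℕ) : IsProbabilityMeasure (seqMeas σ0 κ n) := by
  induction n with
  | zero => rw [seqMeas]; infer_instance
  | succ n ih =>
    haveI := ih
    rw [seqMeas]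
    exact Measure.isProbabilityMeasure_map measurable_snd.aemeasurable

lemma integrable_of_bdd {μ : Measure α} [IsFiniteMeasure μ] {f : α → ℝ} (hf : Measurable f)
    {C : ℝ} (hC : ∀ x, |f x| ≤ C) : Integrable f μ :=
  ⟨hf.aestronglyMeasurable,
    HasFiniteIntegral.of_bounded (C := C)
      (Filter.Eventually.of_forall fun x => by simpa [Real.norm_eq_abs] using hC x)⟩

lemma abs_integral_le {μ : Measure α} [IsProbabilityMeasure μ] {f : α → ℝ}
    {C : ℝ} (hC : ∀ x, |f x| ≤ C) : |∫ x, f x ∂μ| ≤ C := by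
  have := norm_integral_le_of_norm_le_const (μ := μ) (C := C) (f := f)
    (Filter.Eventually.of_forall fun x => by simpa [Real.norm_eq_abs] using hC x)
  simpa [Real.norm_eq_abs, measure_univ] using this

lemma step (σ0 : Measure α) [IsProbabilityMeasure σ0] (κ : Kernel α α) [IsMarkovKernel κ]
    {ψ : α → ℝ} (hψm : Measurable ψ) {Cψ : ℝ} (hψb : ∀ s, |ψ s| ≤ Cψ) (n : ℕ) :
    ∫ s, ψ s ∂(seqMeas σ0 κ (n + 1)) = ∫ x, ∫ s, ψ s ∂(κ x) ∂(seqMeas σ0 κ n) := by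
  rw [seqMeas, integral_map measurable_snd.aemeasurable hψm.aestronglyMeasurable]
  exact Measure.integral_compProd
    (integrable_of_bdd (hψm.comp measurable_snd) (fun p => hψb p.2))

lemma keySum (σ0 : Measure α) [IsProbabilityMeasure σ0] (κ : Kernel α α) [IsMarkovKernel κ]
    {ψ g : α → ℝ} (hψm : Measurable ψ) {Cψ : ℝ} (hψb : ∀ s, |ψ s| ≤ Cψ)
    (hgm : Measurable g) {Cg : ℝ} (hgb : ∀ s, |g s| ≤ Cg)
    (lam J : ℝ) (hJ : J = ∫ s, ψ s ∂σ0)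
    (hrec : ∀ x, g x = ψ x - lam * ∫ s, ψ s ∂(κ x) - (1 - lam) * J) (N : ℕ) :
    ∑ t ∈ Finset.range N, lam ^ t * ∫ s, g s ∂(seqMeas σ0 κ t)
      = lam ^ N * (J - ∫ s, ψ s ∂(seqMeas σ0 κ N)) := by
  set a : ℕ → ℝ := fun t => ∫ s, ψ s ∂(seqMeas σ0 κ t) with ha
  have hstep : ∀ t, ∫ s, g s ∂(seqMeas σ0 κ t) = a t - lam * a (t + 1) - (1 - lam) * J := by
    intro t
    have h1 : lam * a (t + 1) = ∫ x, (ψ x - g x - (1 - lam) * J) ∂(seqMeas σ0 κ t) := by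
      rw [ha]
      simp only
      rw [step σ0 κ hψm hψb t, ← integral_const_mul]
      congr 1
      ext x
      linarith [hrec x]
    have hint1 : Integrable (fun x => ψ x - g x) (seqMeas σ0 κ t) :=
      (integrable_of_bdd hψm hψb).sub (integrable_of_bdd hgm hgb)
    have h2 : ∫ x, (ψ x - g x - (1 - lam) * J) ∂(seqMeas σ0 κ t)
        = a t - ∫ s, g s ∂(seqMeas σ0 κ t) - (1 - lam) * J := by
      rw [integral_sub hint1 (integrable_const _),
        integral_sub (integrable_of_bdd hψm hψb) (integrable_of_bdd hgm hgb), integral_const]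
      simp [measure_univ, ha]
    rw [h2] at h1
    linarith
  have htel : ∑ t ∈ Finset.range N,
      ((fun t => lam ^ t * a t) t - (fun t => lam ^ t * a t) (t + 1))
      = lam ^ 0 * a 0 - lam ^ N * a N := Finset.sum_range_sub' (fun t => lam ^ t * a t) N
  have hgeom : (1 - lam) * ∑ t ∈ Finset.range N, lam ^ t = 1 - lam ^ N := by
    have := geom_sum_mul lam N
    linarith
  have hterm : ∀ t, lam ^ t * ∫ s, g s ∂(seqMeas σ0 κ t)
      = ((fun t => lam ^ t * a t) t - (fun t => lam ^ t * a t) (t + 1))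
        - lam ^ t * ((1 - lam) * J) := by
    intro t
    rw [hstep t]
    simp only
    ring
  rw [Finset.sum_congr rfl (fun t _ => hterm t), Finset.sum_sub_distrib, htel, ← Finset.sum_mul,
    show (∑ t ∈ Finset.range N, lam ^ t) * ((1 - lam) * J)
      = ((1 - lam) * ∑ t ∈ Finset.range N, lam ^ t) * J by ring, hgeom]
  have ha0 : a 0 = J := by rw [ha]; simp only; rw [seqMeas, hJ]
  rw [ha0]
  ring

end DonationAux

/-- **Necessary range of the opponent's payoff for equalizer strategies in the
continuous Donation Game.** If some bounded measurable `ψ`, memory-one strategy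
`σX`, and initial action `σ0` satisfy
`u_Y(x,y) − γ = ψ(x) − lam·∫ ψ dσX[x,y] − (1−lam)·∫ ψ dσ0` for all
`x, y ∈ [0,K]`, then `0 ≤ γ ≤ b(K) − c(K)`. -/
theorem donation_equalizer_payoff_range
    (K : ℝ) (hK : 0 < K)
    (b c : Set.Icc (0 : ℝ) K → ℝ) (hbm : Monotone b) (hcm : Monotone c)
    (hbmeas : Measurable b) (hcmeas : Measurable c)
    (zero top : Set.Icc (0 : ℝ) K) (hzero : (zero : ℝ) = 0) (htop : (top : ℝ) = K)
    (hb0 : b zero = 0) (hc0 : c zero = 0)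
    (hbc : ∀ s : Set.Icc (0 : ℝ) K, 0 < (s : ℝ) → c s < b s)
    (γ : ℝ) (lam : ℝ) (hlam : lam ∈ Set.Ioc (0 : ℝ) 1)
    (ψ : Set.Icc (0 : ℝ) K → ℝ) (hψm : Measurable ψ) (Cψ : ℝ) (hψb : ∀ s, |ψ s| ≤ Cψ)
    (σX : Kernel (Set.Icc (0 : ℝ) K × Set.Icc (0 : ℝ) K) (Set.Icc (0 : ℝ) K))
    [IsMarkovKernel σX]
    (σ0 : Measure (Set.Icc (0 : ℝ) K)) [IsProbabilityMeasure σ0]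
    (hPD : ∀ x y : Set.Icc (0 : ℝ) K,
      (b x - c y) - γ =
        ψ x - lam * ∫ s, ψ s ∂ (σX (x, y)) - (1 - lam) * ∫ s, ψ s ∂ σ0) :
    0 ≤ γ ∧ γ ≤ b top - c top := by
  obtain ⟨hlam0, hlam1⟩ := hlam
  -- basic order facts
  have hx0 : ∀ x : Set.Icc (0 : ℝ) K, zero ≤ x :=
    fun x => Subtype.coe_le_coe.mp (by rw [hzero]; exact x.2.1)
  have hxK : ∀ x : Set.Icc (0 : ℝ) K, x ≤ top :=
    fun x => Subtype.coe_le_coe.mp (by rw [htop]; exact x.2.2)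
  have hbnn : ∀ x : Set.Icc (0 : ℝ) K, 0 ≤ b x := fun x => hb0 ▸ hbm (hx0 x)
  have hble : ∀ x : Set.Icc (0 : ℝ) K, b x ≤ b top := fun x => hbm (hxK x)
  have hbabs : ∀ x : Set.Icc (0 : ℝ) K, |b x| ≤ |b top| := fun x => by
    rw [abs_of_nonneg (hbnn x)]
    exact (hble x).trans (le_abs_self _)
  have hCψ0 : 0 ≤ Cψ := le_trans (abs_nonneg _) (hψb zero)
  set J : ℝ := ∫ s, ψ s ∂σ0 with hJ
  have hJabs : |J| ≤ Cψ := DonationAux.abs_integral_le hψb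
  -- kernel for fixed opponent action y
  have hmy : ∀ y : Set.Icc (0 : ℝ) K, Measurable (fun x : Set.Icc (0 : ℝ) K => (x, y)) :=
    fun y => measurable_id.prodMk measurable_const
  set μ : Set.Icc (0 : ℝ) K → ℕ → Measure (Set.Icc (0 : ℝ) K) :=
    fun y => DonationAux.seqMeas σ0 (σX.comap (fun x => (x, y)) (hmy y)) with hμ
  have hinst : ∀ (y : Set.Icc (0 : ℝ) K) (t : ℕ), IsProbabilityMeasure (μ y t) := fun y t =>
    DonationAux.seqMeas_prob σ0 (σX.comap (fun x => (x, y)) (hmy y)) t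
  -- master identity
  have master : ∀ (y : Set.Icc (0 : ℝ) K) (N : ℕ),
      (∑ t ∈ Finset.range N, lam ^ t * ∫ s, b s ∂(μ y t))
        - (∑ t ∈ Finset.range N, lam ^ t) * (c y + γ)
      = lam ^ N * (J - ∫ s, ψ s ∂(μ y N)) := by
    intro y N
    have hgm : Measurable (fun x : Set.Icc (0 : ℝ) K => b x - (c y + γ)) :=
      hbmeas.sub measurable_const
    have hgb : ∀ x : Set.Icc (0 : ℝ) K, |b x - (c y + γ)| ≤ |b top| + |c y + γ| := fun x => by
      rw [sub_eq_add_neg]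
      exact (abs_add_le _ _).trans (by rw [abs_neg]; exact add_le_add_left (hbabs x) _)
    have hrec : ∀ x : Set.Icc (0 : ℝ) K, b x - (c y + γ)
        = ψ x - lam * ∫ s, ψ s ∂((σX.comap (fun x => (x, y)) (hmy y)) x) - (1 - lam) * J := by
      intro x
      rw [Kernel.comap_apply]
      linarith [hPD x y]
    have hk := DonationAux.keySum σ0 (σX.comap (fun x => (x, y)) (hmy y)) hψm hψb hgm hgb
      lam J hJ hrec N
    have hint : ∀ t : ℕ, ∫ s, (b s - (c y + γ)) ∂(μ y t)
        = (∫ s, b s ∂(μ y t)) - (c y + γ) := by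
      intro t
      haveI := hinst y t
      rw [integral_sub (DonationAux.integrable_of_bdd hbmeas hbabs) (integrable_const _),
        integral_const]
      simp [measure_univ]
    calc (∑ t ∈ Finset.range N, lam ^ t * ∫ s, b s ∂(μ y t))
          - (∑ t ∈ Finset.range N, lam ^ t) * (c y + γ)
        = ∑ t ∈ Finset.range N, lam ^ t * ((∫ s, b s ∂(μ y t)) - (c y + γ)) := by
          rw [Finset.sum_mul, ← Finset.sum_sub_distrib]
          exact Finset.sum_congr rfl fun t _ => by ring
      _ = ∑ t ∈ Finset.range N, lam ^ t * ∫ s, (b s - (c y + γ)) ∂(μ y t) :=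
          Finset.sum_congr rfl fun t _ => by rw [hint t]
      _ = lam ^ N * (J - ∫ s, ψ s ∂(μ y N)) := hk
  -- geometric sum facts
  have hSge : ∀ N : ℕ, (N : ℝ) * lam ^ N ≤ ∑ t ∈ Finset.range N, lam ^ t := by
    intro N
    have := Finset.card_nsmul_le_sum (Finset.range N) (fun t => lam ^ t) (lam ^ N)
      (fun t ht => pow_le_pow_of_le_one hlam0.le hlam1 (Finset.mem_range.mp ht).le)
    simpa [nsmul_eq_mul] using this
  have hSpos : ∀ N : ℕ, 1 ≤ N → 0 < ∑ t ∈ Finset.range N, lam ^ t := by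
    intro N hN
    have h1 : (0 : ℝ) < (N : ℝ) * lam ^ N :=
      mul_pos (by exact_mod_cast hN) (pow_pos hlam0 N)
    exact h1.trans_le (hSge N)
  have hJa : ∀ (y : Set.Icc (0 : ℝ) K) (N : ℕ), |J - ∫ s, ψ s ∂(μ y N)| ≤ 2 * Cψ := by
    intro y N
    haveI := hinst y N
    have h2 : |∫ s, ψ s ∂(μ y N)| ≤ Cψ := DonationAux.abs_integral_le hψb
    calc |J - ∫ s, ψ s ∂(μ y N)| ≤ |J| + |∫ s, ψ s ∂(μ y N)| := abs_sub _ _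
      _ ≤ 2 * Cψ := by linarith
  -- lower bound: γ ≥ -2Cψ/N for all N ≥ 1
  have hlow : ∀ N : ℕ, 1 ≤ N → -(2 * Cψ / N) ≤ γ := by
    intro N hN
    have hm := master zero N
    rw [hc0] at hm
    have hβnn : 0 ≤ ∑ t ∈ Finset.range N, lam ^ t * ∫ s, b s ∂(μ zero t) :=
      Finset.sum_nonneg fun t _ =>
        mul_nonneg (pow_nonneg hlam0.le t) (integral_nonneg hbnn)
    have hub : lam ^ N * (J - ∫ s, ψ s ∂(μ zero N)) ≤ lam ^ N * (2 * Cψ) :=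
      mul_le_mul_of_nonneg_left ((le_abs_self _).trans (hJa zero N)) (pow_nonneg hlam0.le N)
    have h1 : -(lam ^ N * (2 * Cψ)) ≤ (∑ t ∈ Finset.range N, lam ^ t) * γ := by nlinarith
    have h2 : lam ^ N * (2 * Cψ) ≤ (2 * Cψ / N) * ∑ t ∈ Finset.range N, lam ^ t := by
      have hN0 : (0 : ℝ) < N := by exact_mod_cast hN
      have h2C : 0 ≤ 2 * Cψ / N := by positivity
      calc lam ^ N * (2 * Cψ) = (2 * Cψ / N) * ((N : ℝ) * lam ^ N) := by
            field_simp
        _ ≤ (2 * Cψ / N) * ∑ t ∈ Finset.range N, lam ^ t :=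
            mul_le_mul_of_nonneg_left (hSge N) h2C
    have h3 : (-(2 * Cψ / N)) * (∑ t ∈ Finset.range N, lam ^ t)
        ≤ γ * (∑ t ∈ Finset.range N, lam ^ t) := by nlinarith
    exact le_of_mul_le_mul_right h3 (hSpos N hN)
  -- upper bound: γ - (b top - c top) ≤ 2Cψ/N for all N ≥ 1
  have hhigh : ∀ N : ℕ, 1 ≤ N → γ - (b top - c top) ≤ 2 * Cψ / N := by
    intro N hN
    have hm := master top N
    have hβub : ∑ t ∈ Finset.range N, lam ^ t * ∫ s, b s ∂(μ top t)
        ≤ (∑ t ∈ Finset.range N, lam ^ t) * b top := by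
      rw [Finset.sum_mul]
      refine Finset.sum_le_sum fun t _ => ?_
      haveI := hinst top t
      refine mul_le_mul_of_nonneg_left ?_ (pow_nonneg hlam0.le t)
      calc ∫ s, b s ∂(μ top t) ≤ ∫ _, b top ∂(μ top t) :=
            integral_mono (DonationAux.integrable_of_bdd hbmeas hbabs) (integrable_const _) hble
        _ = b top := by rw [integral_const]; simp [measure_univ]
    have hub : -(lam ^ N * (2 * Cψ)) ≤ lam ^ N * (J - ∫ s, ψ s ∂(μ top N)) := by
      have := (abs_le.mp (hJa top N)).1
      nlinarith [pow_nonneg hlam0.le N]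
    have h2 : lam ^ N * (2 * Cψ) ≤ (2 * Cψ / N) * ∑ t ∈ Finset.range N, lam ^ t := by
      have hN0 : (0 : ℝ) < N := by exact_mod_cast hN
      have h2C : 0 ≤ 2 * Cψ / N := by positivity
      calc lam ^ N * (2 * Cψ) = (2 * Cψ / N) * ((N : ℝ) * lam ^ N) := by
            field_simp
        _ ≤ (2 * Cψ / N) * ∑ t ∈ Finset.range N, lam ^ t :=
            mul_le_mul_of_nonneg_left (hSge N) h2C
    have h3 : (γ - (b top - c top)) * (∑ t ∈ Finset.range N, lam ^ t)
        ≤ (2 * Cψ / N) * (∑ t ∈ Finset.range N, lam ^ t) := by nlinarith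
    have := le_of_mul_le_mul_right h3 (hSpos N hN)
    linarith
  -- take limits
  have hlim : Filter.Tendsto (fun N : ℕ => 2 * Cψ / (N : ℝ)) Filter.atTop (nhds 0) :=
    tendsto_const_div_atTop_nhds_zero_nat (2 * Cψ)
  constructor
  · have h0 : Filter.Tendsto (fun N : ℕ => -(2 * Cψ / (N : ℝ))) Filter.atTop (nhds 0) := by
      simpa using hlim.neg
    refine le_of_tendsto h0 ?_
    filter_upwards [Filter.eventually_ge_atTop 1] with N hN using hlow N hN
  · have h1 : γ - (b top - c top) ≤ 0 := by
      refine ge_of_tendsto hlim ?_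
      filter_upwards [Filter.eventually_ge_atTop 1] with N hN using hhigh N hN
    linarith
end

section
/- Impossibility of self-equalizing strategies in the continuous Donation Game: In the continuous Donation Game, for every γ ∈ ℝ and every λ ∈ (0,1], there do NOT exist a bounded measurable function ψ : [0,K] → ℝ, a memory-one strategy σ_X, and an initial action σ_X^0 such that for every x, y ∈ [0,K]: u_X(x,y) − γ = ψ(x) − λ·∫ ψ(s) dσ_X[x,y](s) − (1−λ)·∫ ψ(s) dσ_X^0(s). In other words, player X cannot unilaterally set her own payoff via a Press–Dyson function. -/
open MeasureTheory ProbabilityTheory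

/-- **Impossibility of self-equalizing strategies in the continuous Donation Game.**
For every `γ ∈ ℝ` and `lam ∈ (0,1]` there is no bounded measurable `ψ`, memory-one
strategy `σX`, and initial action `σ0` with
`u_X(x,y) − γ = ψ(x) − lam·∫ ψ dσX[x,y] − (1−lam)·∫ ψ dσ0` for all
`x, y ∈ [0,K]`: player X cannot unilaterally set her own payoff. -/
theorem donation_no_self_equalizer
    (K : ℝ) (hK : 0 < K)
    (b c : Set.Icc (0 : ℝ) K → ℝ) (hbm : Monotone b) (hcm : Monotone c)
    (hbmeas : Measurable b) (hcmeas : Measurable c)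
    (zero top : Set.Icc (0 : ℝ) K) (hzero : (zero : ℝ) = 0) (htop : (top : ℝ) = K)
    (hb0 : b zero = 0) (hc0 : c zero = 0)
    (hbc : ∀ s : Set.Icc (0 : ℝ) K, 0 < (s : ℝ) → c s < b s)
    (γ : ℝ) (lam : ℝ) (hlam : lam ∈ Set.Ioc (0 : ℝ) 1) :
    ¬ ∃ (ψ : Set.Icc (0 : ℝ) K → ℝ) (Cψ : ℝ)
        (σX : Kernel (Set.Icc (0 : ℝ) K × Set.Icc (0 : ℝ) K) (Set.Icc (0 : ℝ) K))
        (σ0 : Measure (Set.Icc (0 : ℝ) K)),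
      Measurable ψ ∧ (∀ s, |ψ s| ≤ Cψ) ∧ IsMarkovKernel σX ∧ IsProbabilityMeasure σ0 ∧
      ∀ x y : Set.Icc (0 : ℝ) K,
        (b y - c x) - γ =
          ψ x - lam * ∫ s, ψ s ∂ (σX (x, y)) - (1 - lam) * ∫ s, ψ s ∂ σ0 := by
  rintro ⟨ψ, Cψ, σX, σ0, hψm, hψb, hMk, hP, heq⟩
  haveI := hMk
  haveI := hP
  have hbdd : BddAbove (Set.range ψ) :=
    ⟨Cψ, by rintro _ ⟨s, rfl⟩; exact (abs_le.1 (hψb s)).2⟩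
  have hbddb : BddBelow (Set.range ψ) :=
    ⟨-Cψ, by rintro _ ⟨s, rfl⟩; exact (abs_le.1 (hψb s)).1⟩
  set M := sSup (Set.range ψ) with hM
  set m := sInf (Set.range ψ) with hm
  have hne : (Set.range ψ).Nonempty := ⟨ψ zero, zero, rfl⟩
  have hint : ∀ (μ : Measure (Set.Icc (0 : ℝ) K)) [IsProbabilityMeasure μ],
      Integrable ψ μ := by
    intro μ _
    exact ⟨hψm.aestronglyMeasurable,
      HasFiniteIntegral.of_bounded (C := Cψ) (Filter.Eventually.of_forall hψb)⟩
  have hle : ∀ (μ : Measure (Set.Icc (0 : ℝ) K)) [IsProbabilityMeasure μ],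
      ∫ s, ψ s ∂μ ≤ M := by
    intro μ _
    have := integral_mono (μ := μ) (hint μ) (integrable_const M)
      (fun s => le_csSup hbdd ⟨s, rfl⟩)
    simpa using this
  have hge : ∀ (μ : Measure (Set.Icc (0 : ℝ) K)) [IsProbabilityMeasure μ],
      m ≤ ∫ s, ψ s ∂μ := by
    intro μ _
    have := integral_mono (μ := μ) (integrable_const m) (hint μ)
      (fun s => csInf_le hbddb ⟨s, rfl⟩)
    simpa using this
  have hz : ∀ x : Set.Icc (0 : ℝ) K, zero ≤ x := by
    intro x
    rw [← Subtype.coe_le_coe, hzero]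
    exact x.2.1
  have ht : ∀ x : Set.Icc (0 : ℝ) K, x ≤ top := by
    intro x
    rw [← Subtype.coe_le_coe, htop]
    exact x.2.2
  have hc_nonneg : ∀ x, 0 ≤ c x := fun x => hc0 ▸ hcm (hz x)
  have hc_le : ∀ x, c x ≤ c top := fun x => hcm (ht x)
  have hlam0 : 0 < lam := hlam.1
  have hlam1 : 0 ≤ 1 - lam := by linarith [hlam.2]
  have hI0le : ∫ s, ψ s ∂σ0 ≤ M := hle σ0
  have hI0ge : m ≤ ∫ s, ψ s ∂σ0 := hge σ0
  -- Part 1: γ ≤ 0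
  have h1 : ∀ x, ψ x ≤ M - γ - c x := by
    intro x
    have he := heq x zero
    rw [hb0] at he
    have hF : ∫ s, ψ s ∂(σX (x, zero)) ≤ M := hle _
    have h2 : lam * ∫ s, ψ s ∂(σX (x, zero)) ≤ lam * M :=
      mul_le_mul_of_nonneg_left hF hlam0.le
    have h3 : (1 - lam) * ∫ s, ψ s ∂σ0 ≤ (1 - lam) * M :=
      mul_le_mul_of_nonneg_left hI0le hlam1
    nlinarith
  have hγ : γ ≤ 0 := by
    have : M ≤ M - γ := by
      apply csSup_le hne
      rintro _ ⟨x, rfl⟩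
      have := h1 x
      have := hc_nonneg x
      linarith
    linarith
  -- Part 2: b top - c top ≤ γ
  have h2 : ∀ x, m + (b top - c top) - γ ≤ ψ x := by
    intro x
    have he := heq x top
    have hF : m ≤ ∫ s, ψ s ∂(σX (x, top)) := hge _
    have h2 : lam * m ≤ lam * ∫ s, ψ s ∂(σX (x, top)) :=
      mul_le_mul_of_nonneg_left hF hlam0.le
    have h3 : (1 - lam) * m ≤ (1 - lam) * ∫ s, ψ s ∂σ0 :=
      mul_le_mul_of_nonneg_left hI0ge hlam1
    have := hc_le x
    nlinarith
  have hγ2 : b top - c top ≤ γ := by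
    have : m + (b top - c top) - γ ≤ m := by
      apply le_csInf hne
      rintro _ ⟨x, rfl⟩
      exact h2 x
    linarith
  have hbt : c top < b top := hbc top (by rw [htop]; exact hK)
  linarith
end

section
/- Deterministic extortionate strategies in the continuous Donation Game: In the continuous Donation Game, assume additionally that b and c are continuous and that s ↦ χ·b(s) + c(s) is strictly increasing, so that ψ(s) := −χ·b(s) − c(s) is a continuous strictly decreasing bijection from [0,K] onto [−χ·b(K) − c(K), 0]. Let χ ≥ 1, 0 ≤ κ ≤ b(K) − c(K), let λ ∈ (0,1) satisfy λ ≥ (b(K) + χ·c(K)) / (χ·b(K) + c(K)), and let x_0 ∈ [0,K] satisfy ((χ−1)κ − λ(χ·b(K)+c(K)) + (b(K)+χ·c(K))) / (1−λ) ≤ χ·b(x_0) + c(x_0) ≤ (χ−1)κ / (1−λ). Then for every y ∈ [0,K] the value w(y) := (−b(y) − χ·c(y) − (χ−1)κ − (1−λ)·ψ(x_0)) / λ lies in [−χ·b(K) − c(K), 0], so the reaction function r(x,y) := ψ^{−1}(w(y)) is well defined, and the deterministic memory-one strategy σ_X[x,y] = δ_{r(x,y)} with initial action σ_X^0 = δ_{x_0}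 satisfies: for every play sequence (ν_t)_{t≥0} compatible with (σ_X^0, σ_X), π_X − κ = χ·(π_Y − κ). -/
open MeasureTheory ProbabilityTheory

set_option maxHeartbeats 2000000 in
/-- **Deterministic extortionate strategies in the continuous Donation Game.**
Assume `b, c` are continuous and `s ↦ χ·b(s) + c(s)` is strictly increasing (so that
`ψ(s) = −χ·b(s) − c(s)` is a continuous strictly decreasing bijection onto
`[−χ·b(K) − c(K), 0]`). For `χ ≥ 1`, `0 ≤ κ ≤ b(K) − c(K)`,
`lam ≥ (b(K)+χc(K))/(χb(K)+c(K))`, and a feasible initial action `x₀`, the value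
`w(y) = (−b(y) − χ·c(y) − (χ−1)κ − (1−lam)·ψ(x₀))/lam` lies in
`[−χ·b(K) − c(K), 0]` for every `y`, the reaction function `r = ψ⁻¹ ∘ w` is well
defined (it exists and is characterized by `ψ(r(x,y)) = w(y)`), and the
deterministic strategy `σX[x,y] = δ_{r(x,y)}` with initial action `δ_{x₀}`
enforces `π_X − κ = χ(π_Y − κ)`. -/
theorem donation_deterministic_extortion
    (K : ℝ) (hK : 0 < K)
    (b c : Set.Icc (0 : ℝ) K → ℝ) (hbm : Monotone b) (hcm : Monotone c)
    (hbmeas : Measurable b) (hcmeas : Measurable c)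
    (hbcont : Continuous b) (hccont : Continuous c)
    (zero top : Set.Icc (0 : ℝ) K) (hzero : (zero : ℝ) = 0) (htop : (top : ℝ) = K)
    (hb0 : b zero = 0) (hc0 : c zero = 0)
    (hbc : ∀ s : Set.Icc (0 : ℝ) K, 0 < (s : ℝ) → c s < b s)
    (χ : ℝ) (hχ : 1 ≤ χ)
    (hsm : StrictMono (fun s : Set.Icc (0 : ℝ) K => χ * b s + c s))
    (κ : ℝ) (hκ : 0 ≤ κ ∧ κ ≤ b top - c top)
    (lam : ℝ) (hlam : lam ∈ Set.Ioo (0 : ℝ) 1)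
    (hlam' : (b top + χ * c top) / (χ * b top + c top) ≤ lam)
    (x₀ : Set.Icc (0 : ℝ) K)
    (hx₀l : ((χ - 1) * κ - lam * (χ * b top + c top) + (b top + χ * c top))
        / (1 - lam) ≤ χ * b x₀ + c x₀)
    (hx₀u : χ * b x₀ + c x₀ ≤ (χ - 1) * κ / (1 - lam))
    (w : Set.Icc (0 : ℝ) K → ℝ)
    (hw : ∀ y, w y = (-(b y) - χ * c y - (χ - 1) * κ
        - (1 - lam) * (-(χ * b x₀) - c x₀)) / lam) :
    (∀ y, w y ∈ Set.Icc (-(χ * b top + c top)) 0) ∧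
    (∃ r : Set.Icc (0 : ℝ) K × Set.Icc (0 : ℝ) K → Set.Icc (0 : ℝ) K,
      ∀ q, -(χ * b (r q)) - c (r q) = w q.2) ∧
    (∀ r : Set.Icc (0 : ℝ) K × Set.Icc (0 : ℝ) K → Set.Icc (0 : ℝ) K,
      Measurable r → (∀ q, -(χ * b (r q)) - c (r q) = w q.2) →
      ∀ σX : Kernel (Set.Icc (0 : ℝ) K × Set.Icc (0 : ℝ) K) (Set.Icc (0 : ℝ) K),
        (∀ q, σX q = Measure.dirac (r q)) →
      ∀ ν : ℕ → Measure (Set.Icc (0 : ℝ) K × Set.Icc (0 : ℝ) K),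
        (∀ t, IsProbabilityMeasure (ν t)) →
        (∀ E : Set (Set.Icc (0 : ℝ) K), MeasurableSet E →
          ν 0 (E ×ˢ Set.univ) = Measure.dirac x₀ E) →
        (∀ t : ℕ, ∀ E : Set (Set.Icc (0 : ℝ) K), MeasurableSet E →
          ν (t + 1) (E ×ˢ Set.univ) = ∫⁻ q, σX q E ∂ ν t) →
        ((1 - lam) * ∑' t : ℕ, lam ^ t * ∫ q, (b q.2 - c q.1) ∂ ν t) - κ
          = χ * (((1 - lam) * ∑' t : ℕ, lam ^ t * ∫ q, (b q.1 - c q.2) ∂ ν t) - κ)) := by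
  obtain ⟨hκ0, hκtop⟩ := hκ
  obtain ⟨hlam0, hlam1⟩ := hlam
  have h1lam : (0:ℝ) < 1 - lam := by linarith
  have hχ0 : (0:ℝ) < χ := by linarith
  -- basic order facts
  have hzy : ∀ y : Set.Icc (0:ℝ) K, zero ≤ y := fun y =>
    Subtype.coe_le_coe.1 (by rw [hzero]; exact y.2.1)
  have hyt : ∀ y : Set.Icc (0:ℝ) K, y ≤ top := fun y =>
    Subtype.coe_le_coe.1 (by rw [htop]; exact y.2.2)
  have hb_nonneg : ∀ y, 0 ≤ b y := fun y => hb0 ▸ hbm (hzy y)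
  have hc_nonneg : ∀ y, 0 ≤ c y := fun y => hc0 ▸ hcm (hzy y)
  have hb_le : ∀ y, b y ≤ b top := fun y => hbm (hyt y)
  have hc_le : ∀ y, c y ≤ c top := fun y => hcm (hyt y)
  have hU : (1 - lam) * (χ * b x₀ + c x₀) ≤ (χ - 1) * κ := by
    have := (le_div_iff₀ h1lam).1 hx₀u
    linarith
  have hL : (χ - 1) * κ - lam * (χ * b top + c top) + (b top + χ * c top)
      ≤ (1 - lam) * (χ * b x₀ + c x₀) := by
    have := (div_le_iff₀ h1lam).1 hx₀l
    linarith
  -- Part 1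
  have hwmem : ∀ y, w y ∈ Set.Icc (-(χ * b top + c top)) 0 := by
    intro y
    rw [hw y]
    have hcy : χ * c y ≤ χ * c top := mul_le_mul_of_nonneg_left (hc_le y) hχ0.le
    have hcy0 : 0 ≤ χ * c y := mul_nonneg hχ0.le (hc_nonneg y)
    constructor
    · rw [le_div_iff₀ hlam0]
      nlinarith [hb_le y, hb_nonneg y]
    · apply div_nonpos_of_nonpos_of_nonneg _ hlam0.le
      nlinarith [hb_nonneg y, hb_le y]
  refine ⟨hwmem, ?_, ?_⟩
  -- the function ψ
  all_goals
    set ψ : Set.Icc (0:ℝ) K → ℝ := fun s => -(χ * b s) - c s with hψdef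
  case _ =>
    -- Part 2 : existence of the reaction function
    have hψc : Continuous ψ := ((continuous_const.mul hbcont).neg).sub hccont
    haveI : Fact ((0:ℝ) ≤ K) := ⟨hK.le⟩
    have hex : ∀ y : Set.Icc (0:ℝ) K, ∃ s, ψ s = w y := by
      intro y
      apply intermediate_value_univ top zero hψc
      have hmem := hwmem y
      have hψt : ψ top = -(χ * b top + c top) := by
        show -(χ * b top) - c top = _; ring
      have hψz : ψ zero = 0 := by
        show -(χ * b zero) - c zero = 0; rw [hb0, hc0]; ring
      rw [hψt, hψz]
      exact ⟨hmem.1, hmem.2⟩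
    exact ⟨fun q => (hex q.2).choose, fun q => (hex q.2).choose_spec⟩
  case _ =>
    -- Part 3 : the extortion identity
    intro r hrmeas hr σX hσX ν hνprob hν0 hνstep
    have hψc : Continuous ψ := ((continuous_const.mul hbcont).neg).sub hccont
    -- integrability of the relevant functions
    have hint : ∀ (t : ℕ) (f : Set.Icc (0:ℝ) K × Set.Icc (0:ℝ) K → ℝ),
        Measurable f → ∀ C : ℝ, (∀ q, |f q| ≤ C) → Integrable f (ν t) := by
      intro t f hf C hC
      haveI := hνprob t
      exact (integrable_const C).mono' hf.aestronglyMeasurable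
        (Filter.Eventually.of_forall fun q => by rw [Real.norm_eq_abs]; exact hC q)
    have hintb2 : ∀ t, Integrable (fun q : Set.Icc (0:ℝ) K × Set.Icc (0:ℝ) K => b q.2) (ν t) :=
      fun t => hint t _ (hbmeas.comp measurable_snd) (b top)
        (fun q => abs_le.2 ⟨by linarith [hb_nonneg q.2, hb_nonneg top], hb_le q.2⟩)
    have hintc2 : ∀ t, Integrable (fun q : Set.Icc (0:ℝ) K × Set.Icc (0:ℝ) K => c q.2) (ν t) :=
      fun t => hint t _ (hcmeas.comp measurable_snd) (c top)
        (fun q => abs_le.2 ⟨by linarith [hc_nonneg q.2, hc_nonneg top], hc_le q.2⟩)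
    have hintb1 : ∀ t, Integrable (fun q : Set.Icc (0:ℝ) K × Set.Icc (0:ℝ) K => b q.1) (ν t) :=
      fun t => hint t _ (hbmeas.comp measurable_fst) (b top)
        (fun q => abs_le.2 ⟨by linarith [hb_nonneg q.1, hb_nonneg top], hb_le q.1⟩)
    have hintc1 : ∀ t, Integrable (fun q : Set.Icc (0:ℝ) K × Set.Icc (0:ℝ) K => c q.1) (ν t) :=
      fun t => hint t _ (hcmeas.comp measurable_fst) (c top)
        (fun q => abs_le.2 ⟨by linarith [hc_nonneg q.1, hc_nonneg top], hc_le q.1⟩)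
    -- abbreviations for the basic integrals
    set Ib2 : ℕ → ℝ := fun t => ∫ q, b q.2 ∂ν t with hIb2
    set Ic2 : ℕ → ℝ := fun t => ∫ q, c q.2 ∂ν t with hIc2
    set Ib1 : ℕ → ℝ := fun t => ∫ q, b q.1 ∂ν t with hIb1
    set Ic1 : ℕ → ℝ := fun t => ∫ q, c q.1 ∂ν t with hIc1
    set A : ℕ → ℝ := fun t => ∫ q, ψ q.1 ∂ν t with hA
    -- marginals
    have hmap0 : (ν 0).map Prod.fst = Measure.dirac x₀ := by
      ext E hE
      rw [Measure.map_apply measurable_fst hE, ← Set.prod_univ, hν0 E hE]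
    have hmap : ∀ t, (ν (t+1)).map Prod.fst = (ν t).map r := by
      intro t
      ext E hE
      rw [Measure.map_apply measurable_fst hE, Measure.map_apply hrmeas hE,
        ← Set.prod_univ, hνstep t E hE]
      have heq : ∀ q, σX q E = Set.indicator (r ⁻¹' E) 1 q := by
        intro q
        rw [hσX q, Measure.dirac_apply' _ hE]
        by_cases h : r q ∈ E <;> simp [Set.indicator_apply, h]
      simp_rw [heq]
      rw [lintegral_indicator_one (hrmeas hE)]
    -- A 0 = ψ x₀
    have hA0 : A 0 = ψ x₀ := by
      have : A 0 = ∫ x, ψ x ∂((ν 0).map Prod.fst) :=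
        (integral_map measurable_fst.aemeasurable hψc.aestronglyMeasurable).symm
      rw [this, hmap0, integral_dirac]
    -- recursion for A
    have hArec : ∀ t, A (t+1)
        = (-(Ib2 t) - χ * Ic2 t - (χ - 1) * κ - (1 - lam) * ψ x₀) / lam := by
      intro t
      haveI := hνprob t
      have h1 : A (t+1) = ∫ x, ψ x ∂((ν (t+1)).map Prod.fst) :=
        (integral_map measurable_fst.aemeasurable hψc.aestronglyMeasurable).symm
      have h2 : ∫ x, ψ x ∂((ν t).map r) = ∫ q, ψ (r q) ∂ν t :=
        integral_map hrmeas.aemeasurable hψc.aestronglyMeasurable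
      rw [h1, hmap t, h2]
      have h3 : ∀ q : Set.Icc (0:ℝ) K × Set.Icc (0:ℝ) K,
          ψ (r q) = (-(b q.2) - χ * c q.2 - (χ - 1) * κ - (1 - lam) * ψ x₀) / lam := by
        intro q
        have := hr q
        rw [hw q.2] at this
        simpa [hψdef] using this
      rw [integral_congr_ae (Filter.Eventually.of_forall h3)]
      have j1 : Integrable (fun q : Set.Icc (0:ℝ) K × Set.Icc (0:ℝ) K
          => χ * c q.2) (ν t) := (hintc2 t).const_mul χ
      have j0 : Integrable (fun q : Set.Icc (0:ℝ) K × Set.Icc (0:ℝ) K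
          => -(b q.2)) (ν t) := by exact (hintb2 t).neg
      have j2 : Integrable (fun q : Set.Icc (0:ℝ) K × Set.Icc (0:ℝ) K
          => -(b q.2) - χ * c q.2) (ν t) := by exact j0.sub j1
      have j3 : Integrable (fun q : Set.Icc (0:ℝ) K × Set.Icc (0:ℝ) K
          => -(b q.2) - χ * c q.2 - (χ - 1) * κ) (ν t) := by
        exact j2.sub (integrable_const _)
      rw [integral_div, integral_sub j3 (integrable_const _),
        integral_sub j2 (integrable_const _), integral_sub j0 j1,
        integral_neg, integral_const_mul, integral_const, integral_const]
      simp [measure_univ]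
      rfl
    -- linearity : A t in terms of Ib1, Ic1
    have hAlin : ∀ t, A t = -(χ * Ib1 t) - Ic1 t := by
      intro t
      have : ∀ q : Set.Icc (0:ℝ) K × Set.Icc (0:ℝ) K,
          ψ q.1 = -(χ * b q.1) - c q.1 := fun q => rfl
      have j1 : Integrable (fun q : Set.Icc (0:ℝ) K × Set.Icc (0:ℝ) K
          => -(χ * b q.1)) (ν t) := by exact ((hintb1 t).const_mul χ).neg
      rw [hA]
      simp only [this]
      rw [integral_sub j1 (hintc1 t), integral_neg, integral_const_mul]
    -- payoff integrals
    set P : ℕ → ℝ := fun t => ∫ q, (b q.2 - c q.1) ∂ν t with hP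
    set Q : ℕ → ℝ := fun t => ∫ q, (b q.1 - c q.2) ∂ν t with hQ
    have hPlin : ∀ t, P t = Ib2 t - Ic1 t := fun t =>
      integral_sub (hintb2 t) (hintc1 t)
    have hQlin : ∀ t, Q t = Ib1 t - Ic2 t := fun t =>
      integral_sub (hintb1 t) (hintc2 t)
    -- uniform bounds
    have hIbound : ∀ (t : ℕ) (f : Set.Icc (0:ℝ) K × Set.Icc (0:ℝ) K → ℝ) (C : ℝ),
        (∀ q, |f q| ≤ C) → |∫ q, f q ∂ν t| ≤ C := by
      intro t f C hC
      haveI := hνprob t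
      have := norm_integral_le_of_norm_le_const (μ := ν t) (f := f) (C := C)
        (Filter.Eventually.of_forall fun q => by rw [Real.norm_eq_abs]; exact hC q)
      simpa using this
    have hAbd : ∀ t, |A t| ≤ χ * b top + c top := by
      intro t
      apply hIbound t _ _ (fun q => ?_)
      have h1 : 0 ≤ χ * b q.1 + c q.1 :=
        add_nonneg (mul_nonneg hχ0.le (hb_nonneg _)) (hc_nonneg _)
      have h2 : χ * b q.1 + c q.1 ≤ χ * b top + c top :=
        add_le_add (mul_le_mul_of_nonneg_left (hb_le _) hχ0.le) (hc_le _)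
      have heq : ψ q.1 = -(χ * b q.1 + c q.1) := by
        show -(χ * b q.1) - c q.1 = _; ring
      rw [heq, abs_neg, abs_of_nonneg h1]
      exact h2
    have hPbd : ∀ t, |P t| ≤ b top + c top := by
      intro t
      apply hIbound t _ _ (fun q => ?_)
      have := hb_nonneg q.2; have := hb_le q.2
      have := hc_nonneg q.1; have := hc_le q.1
      rw [abs_le]; constructor <;> linarith
    have hQbd : ∀ t, |Q t| ≤ b top + c top := by
      intro t
      apply hIbound t _ _ (fun q => ?_)
      have := hb_nonneg q.1; have := hb_le q.1
      have := hc_nonneg q.2; have := hc_le q.2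
      rw [abs_le]; constructor <;> linarith
    -- summability
    have hgeo : Summable (fun t : ℕ => lam ^ t) :=
      summable_geometric_of_lt_one hlam0.le hlam1
    have hsummable : ∀ (u : ℕ → ℝ) (C : ℝ), (∀ t, |u t| ≤ C) →
        Summable (fun t => lam ^ t * u t) := by
      intro u C hC
      apply Summable.of_norm_bounded (hgeo.mul_right C)
      intro t
      rw [norm_mul, Real.norm_eq_abs, Real.norm_eq_abs,
        abs_of_nonneg (pow_nonneg hlam0.le t)]
      exact mul_le_mul_of_nonneg_left (hC t) (pow_nonneg hlam0.le t)
    have hfA : Summable (fun t => lam ^ t * A t) := hsummable A _ hAbd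
    have hfA1 : Summable (fun t => lam ^ (t+1) * A (t+1)) :=
      (summable_nat_add_iff 1).2 hfA
    have hfP : Summable (fun t => lam ^ t * P t) := hsummable P _ hPbd
    have hfQ : Summable (fun t => lam ^ t * Q t) := hsummable Q _ hQbd
    -- the constant
    obtain ⟨Cst, hCst⟩ : ∃ C : ℝ, C = (χ - 1) * κ + (1 - lam) * ψ x₀ := ⟨_, rfl⟩
    have hfC : Summable (fun t : ℕ => lam ^ t * Cst) := hgeo.mul_right Cst
    -- pointwise identity
    have hpt : ∀ t, lam ^ t * P t - χ * (lam ^ t * Q t)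
        = (lam ^ t * A t - lam ^ (t+1) * A (t+1)) - lam ^ t * Cst := by
      intro t
      have hrec := hArec t
      have hlamA : lam * A (t+1) = -(Ib2 t) - χ * Ic2 t - (χ - 1) * κ - (1 - lam) * ψ x₀ := by
        rw [hrec]; field_simp
      have := hAlin t
      rw [hPlin t, hQlin t]
      have hpow : lam ^ (t+1) * A (t+1) = lam ^ t * (lam * A (t+1)) := by ring
      rw [hpow, hlamA, this, hCst]
      ring
    -- telescoping sum
    have htel : ∑' t, (lam ^ t * A t - lam ^ (t+1) * A (t+1)) = A 0 := by
      rw [Summable.tsum_sub hfA hfA1]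
      have := Summable.tsum_eq_zero_add hfA
      simp only [pow_zero, one_mul] at this
      rw [this]
      ring
    have hcsum : ∑' t : ℕ, lam ^ t * Cst = Cst / (1 - lam) := by
      rw [tsum_mul_right, tsum_geometric_of_lt_one hlam0.le hlam1]
      field_simp
    -- the main computation
    have hmain : (∑' t, lam ^ t * P t) - χ * (∑' t, lam ^ t * Q t)
        = A 0 - Cst / (1 - lam) := by
      rw [← tsum_mul_left, ← Summable.tsum_sub hfP (hfQ.mul_left χ)]
      have : ∀ t, lam ^ t * P t - χ * (lam ^ t * Q t)
          = (lam ^ t * A t - lam ^ (t+1) * A (t+1)) - lam ^ t * Cst := hpt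
      rw [tsum_congr this, Summable.tsum_sub (hfA.sub hfA1) hfC, htel, hcsum]
    rw [hA0] at hmain
    have hfin : (1 - lam) * ((∑' t, lam ^ t * P t) - χ * (∑' t, lam ^ t * Q t))
        = (1 - χ) * κ := by
      rw [hmain, hCst]
      field_simp
      ring
    simp only [hP, hQ] at hfin ⊢
    nlinarith [hfin]
end

section
/- Deterministic equalizer strategies in the continuous Donation Game: In the continuous Donation Game, assume additionally that b is continuous and strictly increasing, so that b is a continuous strictly increasing bijection from [0,K] onto [0, b(K)]. Let 0 ≤ γ ≤ b(K) − c(K), let λ ∈ (0,1) satisfy λ ≥ c(K)/b(K), and let x_0 ∈ [0,K] satisfy (γ − λ·b(K) + c(K)) / (1−λ) ≤ b(x_0) ≤ γ / (1−λ). Then for every y ∈ [0,K] the value w(y) := (c(y) + γ − (1−λ)·b(x_0)) / λ lies in [0, b(K)], so the reaction function r(x,y) := b^{−1}(w(y)) is well defined, and the deterministic memory-one strategy σ_X[x,y] = δ_{r(x,y)} with initial action σ_X^0 = δ_{x_0} satisfies: for every play sequence (ν_t)_{t≥0} compatible with (σ_X^0, σ_X), the opponent's expected discounted payoff satisfies π_Y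 = γ. -/
open MeasureTheory ProbabilityTheory

lemma dde_integrable {α : Type*} [MeasurableSpace α] (μ : Measure α) [IsFiniteMeasure μ]
    (f : α → ℝ) (hf : Measurable f) (M : ℝ) (hM : ∀ a, |f a| ≤ M) : Integrable f μ :=
  ⟨hf.aestronglyMeasurable,
    HasFiniteIntegral.of_bounded (C := M) (Filter.Eventually.of_forall fun a => by
      simpa using hM a)⟩

/-- **Deterministic equalizer strategies in the continuous Donation Game.**
Assume `b` is continuous and strictly increasing (so that `b` is a continuous
strictly increasing bijection from `[0,K]` onto `[0, b(K)]`). For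
`0 ≤ γ ≤ b(K) − c(K)`, `lam ≥ c(K)/b(K)`, and a feasible initial action `x₀`, the
value `w(y) = (c(y) + γ − (1−lam)·b(x₀))/lam` lies in `[0, b(K)]` for every `y`,
the reaction function `r = b⁻¹ ∘ w` is well defined (it exists and is characterized
by `b(r(x,y)) = w(y)`), and the deterministic strategy `σX[x,y] = δ_{r(x,y)}` with
initial action `δ_{x₀}` enforces `π_Y = γ`. -/
theorem donation_deterministic_equalizer
    (K : ℝ) (hK : 0 < K)
    (b c : Set.Icc (0 : ℝ) K → ℝ) (hbm : Monotone b) (hcm : Monotone c)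
    (hbmeas : Measurable b) (hcmeas : Measurable c)
    (hbcont : Continuous b) (hbsm : StrictMono b)
    (zero top : Set.Icc (0 : ℝ) K) (hzero : (zero : ℝ) = 0) (htop : (top : ℝ) = K)
    (hb0 : b zero = 0) (hc0 : c zero = 0)
    (hbc : ∀ s : Set.Icc (0 : ℝ) K, 0 < (s : ℝ) → c s < b s)
    (γ : ℝ) (hγ : 0 ≤ γ ∧ γ ≤ b top - c top)
    (lam : ℝ) (hlam : lam ∈ Set.Ioo (0 : ℝ) 1)
    (hlam' : c top / b top ≤ lam)
    (x₀ : Set.Icc (0 : ℝ) K)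
    (hx₀l : (γ - lam * b top + c top) / (1 - lam) ≤ b x₀)
    (hx₀u : b x₀ ≤ γ / (1 - lam))
    (w : Set.Icc (0 : ℝ) K → ℝ)
    (hw : ∀ y, w y = (c y + γ - (1 - lam) * b x₀) / lam) :
    (∀ y, w y ∈ Set.Icc (0 : ℝ) (b top)) ∧
    (∃ r : Set.Icc (0 : ℝ) K × Set.Icc (0 : ℝ) K → Set.Icc (0 : ℝ) K,
      ∀ q, b (r q) = w q.2) ∧
    (∀ r : Set.Icc (0 : ℝ) K × Set.Icc (0 : ℝ) K → Set.Icc (0 : ℝ) K,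
      Measurable r → (∀ q, b (r q) = w q.2) →
      ∀ σX : Kernel (Set.Icc (0 : ℝ) K × Set.Icc (0 : ℝ) K) (Set.Icc (0 : ℝ) K),
        (∀ q, σX q = Measure.dirac (r q)) →
      ∀ ν : ℕ → Measure (Set.Icc (0 : ℝ) K × Set.Icc (0 : ℝ) K),
        (∀ t, IsProbabilityMeasure (ν t)) →
        (∀ E : Set (Set.Icc (0 : ℝ) K), MeasurableSet E →
          ν 0 (E ×ˢ Set.univ) = Measure.dirac x₀ E) →
        (∀ t : ℕ, ∀ E : Set (Set.Icc (0 : ℝ) K), MeasurableSet E →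
          ν (t + 1) (E ×ˢ Set.univ) = ∫⁻ q, σX q E ∂ ν t) →
        (1 - lam) * ∑' t : ℕ, lam ^ t * ∫ q, (b q.1 - c q.2) ∂ ν t = γ) := by
  obtain ⟨hγ0, hγ1⟩ := hγ
  obtain ⟨hlam0, hlam1⟩ := hlam
  have h1l : (0:ℝ) < 1 - lam := by linarith
  -- order facts
  have hleb : ∀ s : Set.Icc (0:ℝ) K, zero ≤ s := fun s =>
    Subtype.coe_le_coe.mp (by rw [hzero]; exact s.2.1)
  have hlet : ∀ s : Set.Icc (0:ℝ) K, s ≤ top := fun s =>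
    Subtype.coe_le_coe.mp (by rw [htop]; exact s.2.2)
  have hb_nn : ∀ s, 0 ≤ b s := fun s => hb0 ▸ hbm (hleb s)
  have hb_ub : ∀ s, b s ≤ b top := fun s => hbm (hlet s)
  have hc_nn : ∀ s, 0 ≤ c s := fun s => hc0 ▸ hcm (hleb s)
  have hc_ub : ∀ s, c s ≤ c top := fun s => hcm (hlet s)
  -- translate the x₀ hypotheses
  have hx₀u' : (1 - lam) * b x₀ ≤ γ := by
    have := (le_div_iff₀ h1l).mp hx₀u; linarith
  have hx₀l' : γ - lam * b top + c top ≤ (1 - lam) * b x₀ := by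
    have := (div_le_iff₀ h1l).mp hx₀l; linarith
  -- Part 1
  have part1 : ∀ y, w y ∈ Set.Icc (0 : ℝ) (b top) := by
    intro y
    rw [hw y]
    constructor
    · apply div_nonneg _ hlam0.le
      have := hc_nn y; linarith
    · rw [div_le_iff₀ hlam0]
      have := hc_ub y; nlinarith
  refine ⟨part1, ?_, ?_⟩
  · -- Part 2: existence of r via IVT
    haveI : ConnectedSpace (Set.Icc (0:ℝ) K) :=
      Subtype.connectedSpace ⟨⟨0, Set.mem_Icc.mpr ⟨le_rfl, hK.le⟩⟩, isPreconnected_Icc⟩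
    have hrange : ∀ q : Set.Icc (0:ℝ) K × Set.Icc (0:ℝ) K, ∃ s, b s = w q.2 := by
      intro q
      have : w q.2 ∈ Set.Icc (b zero) (b top) := by
        rw [hb0]; exact part1 q.2
      exact intermediate_value_univ zero top hbcont this
    exact ⟨fun q => (hrange q).choose, fun q => (hrange q).choose_spec⟩
  · -- Part 3
    intro r hrmeas hr σX hσX ν hνprob hν0 hνrec
    haveI := fun t => hνprob t
    -- marginals
    have hfst0 : Measure.map Prod.fst (ν 0) = Measure.dirac x₀ := by
      apply Measure.ext; intro E hE
      rw [Measure.map_apply measurable_fst hE, ← Set.prod_univ, hν0 E hE]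
    have hfstS : ∀ t, Measure.map Prod.fst (ν (t+1)) = Measure.map r (ν t) := by
      intro t
      apply Measure.ext; intro E hE
      rw [Measure.map_apply measurable_fst hE, ← Set.prod_univ, hνrec t E hE,
        Measure.map_apply hrmeas hE]
      simp only [hσX]
      rw [← lintegral_indicator_one (hrmeas hE)]
      congr 1; ext q
      rw [Measure.dirac_apply' _ hE]
      by_cases h : r q ∈ E <;> simp [Set.indicator_apply, Set.mem_preimage, h]
    -- abbreviations
    set B : ℕ → ℝ := fun t => ∫ q, b q.1 ∂ ν t with hB
    set C : ℕ → ℝ := fun t => ∫ q, c q.2 ∂ ν t with hC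
    set D : ℝ := γ - (1 - lam) * b x₀ with hD
    -- integrability
    have hintb : ∀ t, Integrable (fun q : Set.Icc (0:ℝ) K × Set.Icc (0:ℝ) K => b q.1) (ν t) :=
      fun t => dde_integrable _ _ (hbmeas.comp measurable_fst) (b top)
        (fun q => abs_le.mpr ⟨by linarith [hb_nn q.1, hb_nn top], hb_ub q.1⟩)
    have hintc : ∀ t, Integrable (fun q : Set.Icc (0:ℝ) K × Set.Icc (0:ℝ) K => c q.2) (ν t) :=
      fun t => dde_integrable _ _ (hcmeas.comp measurable_snd) (c top)
        (fun q => abs_le.mpr ⟨by linarith [hc_nn q.2, hc_nn top], hc_ub q.2⟩)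
    -- B 0
    have hB0 : B 0 = b x₀ := by
      have : B 0 = ∫ x, b x ∂ (Measure.map Prod.fst (ν 0)) := by
        rw [integral_map measurable_fst.aemeasurable hbmeas.aestronglyMeasurable]
      rw [this, hfst0, integral_dirac]
    -- recursion for B
    have hBrec : ∀ t, lam * B (t+1) = C t + D := by
      intro t
      have h1 : B (t+1) = ∫ q, b (r q) ∂ ν t := by
        have : B (t+1) = ∫ x, b x ∂ (Measure.map Prod.fst (ν (t+1))) := by
          rw [integral_map measurable_fst.aemeasurable hbmeas.aestronglyMeasurable]
        rw [this, hfstS t,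
          integral_map hrmeas.aemeasurable hbmeas.aestronglyMeasurable]
      have h2 : ∀ q, b (r q) = (c q.2 + D) / lam := by
        intro q; rw [hr q, hw, hD]; ring_nf
      rw [h1]
      simp only [h2]
      rw [integral_div, integral_add (hintc t) (integrable_const D), integral_const]
      simp [measure_univ]
      field_simp
      rfl
    -- bounds on B
    have hBnn : ∀ t, 0 ≤ B t := fun t => integral_nonneg fun q => hb_nn q.1
    have hBub : ∀ t, B t ≤ b top := by
      intro t
      have h := integral_mono (μ := ν t) (hintb t) (integrable_const (b top))
        (fun q => hb_ub q.1)
      have h2 : ∫ (_ : Set.Icc (0:ℝ) K × Set.Icc (0:ℝ) K), b top ∂ ν t = b top := by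
        simp [measure_univ]
      rw [h2] at h
      exact h
    -- summability
    have hgeo : Summable (fun t : ℕ => lam ^ t) :=
      summable_geometric_of_lt_one hlam0.le hlam1
    set f : ℕ → ℝ := fun t => lam ^ t * B t with hf
    have hfs : Summable f := by
      apply Summable.of_nonneg_of_le
        (fun t => mul_nonneg (pow_nonneg hlam0.le t) (hBnn t))
        (fun t => mul_le_mul_of_nonneg_left (hBub t) (pow_nonneg hlam0.le t))
      exact hgeo.mul_right (b top)
    have hfs' : Summable (fun t => f (t+1)) := (summable_nat_add_iff 1).mpr hfs
    -- pointwise identity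
    have hpt : ∀ t : ℕ, lam ^ t * ∫ q, (b q.1 - c q.2) ∂ ν t
        = (f t - f (t+1)) + lam ^ t * D := by
      intro t
      rw [integral_sub (hintb t) (hintc t)]
      have hCt : C t = lam * B (t+1) - D := by rw [hBrec t]; ring
      show lam ^ t * (B t - C t) = (lam ^ t * B t - lam ^ (t+1) * B (t+1)) + lam ^ t * D
      rw [hCt]; ring
    calc (1 - lam) * ∑' t : ℕ, lam ^ t * ∫ q, (b q.1 - c q.2) ∂ ν t
        = (1 - lam) * ∑' t : ℕ, ((f t - f (t+1)) + lam ^ t * D) := by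
          congr 1; exact tsum_congr hpt
      _ = (1 - lam) * ((∑' t, (f t - f (t+1))) + ∑' t : ℕ, lam ^ t * D) := by
          rw [Summable.tsum_add (hfs.sub hfs') (hgeo.mul_right D)]
      _ = (1 - lam) * ((f 0) + (1 - lam)⁻¹ * D) := by
          rw [Summable.tsum_sub hfs hfs', Summable.tsum_eq_zero_add hfs, tsum_mul_right,
            tsum_geometric_of_lt_one hlam0.le hlam1]
          ring
      _ = γ := by
          have : f 0 = b x₀ := by simp [hf, hB0]
          rw [this, hD]
          field_simp
          ring
end
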